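/- arXiv:1209.0938 — 3 statements merged into one kernel-verified Lean document; each statement's English description precedes it below -/
import Mathlib

section
/- The maps α ↦ R(α) and R ↦ Read(R) are mutually inverse bijections between the set SRW(ℤ⁺) of words on which the sliding and recording algorithm does not terminate and the set STT of all standard tower tableaux of all shapes. -/
abbrev Cell : Type := ℕ × ℕ

/-- A tower diagram: a finite set of cells `(i, j)` with `i ≥ 1` that is downward
closed in each column. -/
def IsTowerDiagram (T : Finset Cell) : Prop :=
  ∀ c ∈ T, 1 ≤ c.1 ∧ ∀ j' ≤ c.2, (c.1, j') ∈ T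

/-- The flight path of a cell of `T` (F1: direct flight, F2: zigzag flight). -/
inductive FlightPath (T : Finset Cell) : Cell → Finset Cell → Prop
  | direct (i j : ℕ) (hmem : (i, j) ∈ T)
      (hnone : ∀ c ∈ T, ¬(c.1 < i ∧ c.1 + c.2 + 1 = i + j)) :
      FlightPath T (i, j) {(i, j)}
  | zigzag (i j i' j' : ℕ) (P : Finset Cell)
      (hmem : (i, j) ∈ T) (hmem' : (i', j') ∈ T)
      (hleft : i' < i) (hdiag : i' + j' + 1 = i + j)
      (hclosest : ∀ c ∈ T, c.1 < i → c.1 + c.2 + 1 = i + j → c.1 ≤ i')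
      (hup : (i', j' + 1) ∈ T)
      (hrec : FlightPath T (i', j') P) :
      FlightPath T (i, j) (insert (i, j) (insert (i', j' + 1) P))

/-- `FlightNumber T c f`: `c` has a flight path in `T` whose lexicographically
least cell has coordinate sum `f`. -/
def FlightNumber (T : Finset Cell) (c : Cell) (f : ℕ) : Prop :=
  ∃ P : Finset Cell, FlightPath T c P ∧
    ∃ m ∈ P, m.1 + m.2 = f ∧ ∀ p ∈ P, m.1 < p.1 ∨ (m.1 = p.1 ∧ m.2 ≤ p.2)

/-- A corner cell: it has a flight path and no cell on top of it. -/
def IsCornerCell (T : Finset Cell) (c : Cell) : Prop :=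
  c ∈ T ∧ (c.1, c.2 + 1) ∉ T ∧ ∃ P, FlightPath T c P

/-- `SlideAux T lo α T'` : sliding `α` into the subdiagram of `T` consisting of
the towers in columns `≥ lo` does not terminate and produces `T'`. -/
inductive SlideAux (T : Finset Cell) : ℕ → ℕ → Finset Cell → Prop
  | s1a (lo α : ℕ)
      (h1 : ∀ c ∈ T, lo ≤ c.1 → c.1 + c.2 + 1 ≠ α)
      (h2 : ∀ c ∈ T, lo ≤ c.1 → c.1 + c.2 ≠ α) :
      SlideAux T lo α (insert (α, 0) T)
  | s1c (lo α : ℕ) (T' : Finset Cell)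
      (h1 : ∀ c ∈ T, lo ≤ c.1 → c.1 + c.2 + 1 ≠ α)
      (h2 : (α, 0) ∈ T) (h2' : lo ≤ α) (h3 : (α, 1) ∈ T)
      (hrec : SlideAux T (α + 1) (α + 1) T') :
      SlideAux T lo α T'
  | s2a (lo α i j : ℕ)
      (hmem : (i, j) ∈ T) (hlo : lo ≤ i) (hdiag : i + j + 1 = α)
      (hmin : ∀ c ∈ T, lo ≤ c.1 → c.1 + c.2 + 1 = α → i ≤ c.1)
      (htop : (i, j + 1) ∉ T) :
      SlideAux T lo α (insert (i, j + 1) T)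
  | s2c (lo α i j : ℕ) (T' : Finset Cell)
      (hmem : (i, j) ∈ T) (hlo : lo ≤ i) (hdiag : i + j + 1 = α)
      (hmin : ∀ c ∈ T, lo ≤ c.1 → c.1 + c.2 + 1 = α → i ≤ c.1)
      (h1 : (i, j + 1) ∈ T) (h2 : (i, j + 2) ∈ T)
      (hrec : SlideAux T (i + 1) (α + 1) T') :
      SlideAux T lo α T'

/-- The slide `α ↘ T` does not terminate and produces `T'`. -/
def Slides (T : Finset Cell) (α : ℕ) (T' : Finset Cell) : Prop :=
  SlideAux T 0 α T'

/-- Successive sliding of the letters of a word into the empty diagram. -/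
inductive SRDiagram : List ℕ → Finset Cell → Prop
  | nil : SRDiagram [] ∅
  | snoc {w : List ℕ} {T T' : Finset Cell} {a : ℕ}
      (hw : SRDiagram w T) (ha : Slides T a T') :
      SRDiagram (w ++ [a]) T'

/-- The shape (underlying diagram) of a labelled tableau. -/
def shapeOf (R : Finset (Cell × ℕ)) : Finset Cell := R.image Prod.fst

/-- The recording tableau of the SR algorithm: the cell created at step `k` is
labelled `k`. -/
inductive SRRecord : List ℕ → Finset (Cell × ℕ) → Prop
  | nil : SRRecord [] ∅
  | snoc {w : List ℕ} {R : Finset (Cell × ℕ)} {a : ℕ} {c : Cell}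
      (hw : SRRecord w R) (hc : c ∉ shapeOf R)
      (ha : Slides (shapeOf R) a (insert c (shapeOf R))) :
      SRRecord (w ++ [a]) (insert (c, w.length + 1) R)

/-- The sliding tableau of the SR algorithm: each new cell `(i, j)` is labelled
`i + j`. -/
inductive SRSliding : List ℕ → Finset (Cell × ℕ) → Prop
  | nil : SRSliding [] ∅
  | snoc {w : List ℕ} {S : Finset (Cell × ℕ)} {a : ℕ} {c : Cell}
      (hw : SRSliding w S) (hc : c ∉ shapeOf S)
      (ha : Slides (shapeOf S) a (insert c (shapeOf S))) :
      SRSliding (w ++ [a]) (insert (c, c.1 + c.2) S)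

/-- A tower tableau: a bijective labelling of a tower diagram by `{1, …, n}`. -/
def IsTowerTableau (R : Finset (Cell × ℕ)) : Prop :=
  IsTowerDiagram (shapeOf R) ∧
  (∀ p ∈ R, ∀ q ∈ R, p.1 = q.1 → p = q) ∧
  R.image Prod.snd = Finset.Icc 1 R.card

/-- The subtableau of cells with labels `≤ a`. -/
def labelLE (R : Finset (Cell × ℕ)) (a : ℕ) : Finset (Cell × ℕ) :=
  R.filter fun p => p.2 ≤ a

/-- A standard tower tableau. -/
def IsStandardTowerTableau (R : Finset (Cell × ℕ)) : Prop :=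
  IsTowerTableau R ∧
  ∀ p ∈ R, IsTowerDiagram (shapeOf (labelLE R p.2)) ∧
    IsCornerCell (shapeOf (labelLE R p.2)) p.1

/-- `ReadsTo R w` : `w` is the reading word of the tableau `R`: the `k`-th letter
is the flight number, in `shape (R_{≤ k})`, of the cell labelled `k`. -/
def ReadsTo (R : Finset (Cell × ℕ)) (w : List ℕ) : Prop :=
  w.length = R.card ∧
  ∀ k : Fin w.length, ∀ c : Cell, (c, (k : ℕ) + 1) ∈ R →
    FlightNumber (shapeOf (labelLE R ((k : ℕ) + 1))) c (w.get k)

/-- A word of positive integers. -/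
def IsPosWord (w : List ℕ) : Prop := ∀ a ∈ w, 1 ≤ a

/-- The permutation represented by a word: the product of the corresponding
adjacent transpositions `sᵢ = (i, i+1)`. -/
def permOf (w : List ℕ) : Equiv.Perm ℕ :=
  (w.map fun i => Equiv.swap i (i + 1)).prod

/-- A reduced word: of minimal length among the positive words representing the
same permutation. -/
def IsReducedWord (w : List ℕ) : Prop :=
  IsPosWord w ∧
    ∀ w' : List ℕ, IsPosWord w' → permOf w' = permOf w → w.length ≤ w'.length

/-- A finite permutation: an element of the direct limit `⋃ₙ Sₙ`. -/
def FinitePerm (ω : Equiv.Perm ℕ) : Prop := ∃ w, IsPosWord w ∧ permOf w = ω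

/-- The Coxeter length of a finite permutation. -/
noncomputable def coxLength (ω : Equiv.Perm ℕ) : ℕ :=
  sInf {n | ∃ w : List ℕ, IsPosWord w ∧ permOf w = ω ∧ w.length = n}

/-- The Rothe diagram of a permutation (pairs written `(row, column)`). -/
def RotheDiagram (ω : Equiv.Perm ℕ) : Set (ℕ × ℕ) :=
  {p | 1 ≤ p.1 ∧ 1 ≤ p.2 ∧ p.2 < ω p.1 ∧ p.1 < ω.symm p.2}

/-- Interchanging rows `i` and `i + 1` of a diagram. -/
def rowSwap (i : ℕ) (D : Set (ℕ × ℕ)) : Set (ℕ × ℕ) :=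
  {p | (Equiv.swap i (i + 1) p.1, p.2) ∈ D}

/-- The natural labelling of a tower diagram: labels `1, …, n` go bottom to top
within each tower, taking the towers from right to left. -/
def naturalTableau (T : Finset Cell) : Finset (Cell × ℕ) :=
  T.image fun c => (c, (T.filter fun d => c.1 < d.1).card + c.2 + 1)

/-- A word in natural form: a concatenation of blocks, each a strictly
increasing run of consecutive integers, whose initial terms strictly decrease. -/
def IsNaturalForm (η : List ℕ) : Prop :=
  ∃ blocks : List (List ℕ),
    η = blocks.flatten ∧
    (∀ b ∈ blocks, ∃ s len : ℕ, 1 ≤ len ∧ b = List.range' s len) ∧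
    List.Chain' (· > ·) (blocks.map fun b => b.headI)
/-! ### Auxiliary: partial flight paths -/

/-- A partial flight path from `c` down to `m`: genuine zigzag steps, but no
termination (F1) requirement at the base `m`. -/
inductive PartialFlight (T : Finset Cell) : Cell → Cell → Finset Cell → Prop
  | refl (c : Cell) (hmem : c ∈ T) : PartialFlight T c c {c}
  | step (i j i' j' : ℕ) (m : Cell) (P : Finset Cell)
      (hmem : (i, j) ∈ T) (hmem' : (i', j') ∈ T)
      (hleft : i' < i) (hdiag : i' + j' + 1 = i + j)
      (hclosest : ∀ c ∈ T, c.1 < i → c.1 + c.2 + 1 = i + j → c.1 ≤ i')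
      (hup : (i', j' + 1) ∈ T)
      (hrec : PartialFlight T (i', j') m P) :
      PartialFlight T (i, j) m (insert (i, j) (insert (i', j' + 1) P))

theorem PartialFlight.mem_base {T : Finset Cell} {c m : Cell} {P : Finset Cell}
    (h : PartialFlight T c m P) : m ∈ T ∧ m ∈ P ∧ c ∈ P ∧ c ∈ T := by
  induction h with
  | refl c hmem => exact ⟨hmem, by simp, by simp, hmem⟩
  | step i j i' j' m P hmem hmem' hleft hdiag hclosest hup hrec ih =>
      exact ⟨ih.1, by simp [ih.2.1], by simp, hmem⟩

theorem PartialFlight.lex_min {T : Finset Cell} {c m : Cell} {P : Finset Cell}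
    (h : PartialFlight T c m P) :
    ∀ p ∈ P, m.1 < p.1 ∨ (m.1 = p.1 ∧ m.2 ≤ p.2) := by
  induction h with
  | refl c hmem => intro p hp; simp at hp; subst hp; right; exact ⟨rfl, le_refl _⟩
  | step i j i' j' m P hmem hmem' hleft hdiag hclosest hup hrec ih =>
      intro p hp
      simp only [Finset.mem_insert] at hp
      have h1 := ih (i', j') hrec.mem_base.2.2.1
      rcases hp with rfl | rfl | hp
      · rcases h1 with h1 | h1
        · left; exact lt_trans h1 hleft
        · left; exact h1.1 ▸ hleft
      · rcases h1 with h1 | h1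
        · left; exact h1
        · right; exact ⟨h1.1, le_trans h1.2 (Nat.le_succ _)⟩
      · exact ih p hp

theorem FlightPath.mem_self {T : Finset Cell} {c : Cell} {P : Finset Cell}
    (h : FlightPath T c P) : c ∈ P := by
  induction h with
  | direct i j hmem hnone => simp
  | zigzag => simp

/-- Compose a partial flight with a full flight path at the base. -/
theorem PartialFlight.comp {T : Finset Cell} {c m : Cell} {P Q : Finset Cell}
    (h : PartialFlight T c m P) (hQ : FlightPath T m Q) :
    FlightPath T c (P ∪ Q) := by
  induction h with
  | refl c hmem =>
      have : ({c} : Finset Cell) ∪ Q = Q := by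
        apply Finset.union_eq_right.2; simp [hQ.mem_self]
      rw [this]; exact hQ
  | step i j i' j' m P hmem hmem' hleft hdiag hclosest hup hrec ih =>
      have h2 := FlightPath.zigzag i j i' j' (P ∪ Q) hmem hmem' hleft hdiag hclosest hup (ih hQ)
      rw [Finset.insert_union, Finset.insert_union]; exact h2

/-- Extract a partial flight (down to the terminal cell) from a flight path. -/
theorem FlightPath.to_partial {T : Finset Cell} {c : Cell} {P : Finset Cell}
    (h : FlightPath T c P) :
    ∃ m, PartialFlight T c m P ∧
      ∀ d ∈ T, ¬(d.1 < m.1 ∧ d.1 + d.2 + 1 = m.1 + m.2) := by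
  induction h with
  | direct i j hmem hnone => exact ⟨(i, j), PartialFlight.refl _ hmem, hnone⟩
  | zigzag i j i' j' P hmem hmem' hleft hdiag hclosest hup hrec ih =>
      obtain ⟨m, hm, hnone⟩ := ih
      exact ⟨m, PartialFlight.step i j i' j' m P hmem hmem' hleft hdiag hclosest hup hm, hnone⟩

theorem PartialFlight.congr {T : Finset Cell} {c m : Cell} {P P' : Finset Cell}
    (h : PartialFlight T c m P) (hP : P = P') : PartialFlight T c m P' := hP ▸ h

/-- Extend a partial flight by one zigzag step at the bottom. -/
theorem PartialFlight.snoc {T : Finset Cell} {c m : Cell} {P : Finset Cell}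
    (h : PartialFlight T c m P) (y : Cell)
    (hy : y ∈ T) (hyl : y.1 < m.1) (hyd : y.1 + y.2 + 1 = m.1 + m.2)
    (hycl : ∀ d ∈ T, d.1 < m.1 → d.1 + d.2 + 1 = m.1 + m.2 → d.1 ≤ y.1)
    (hyu : (y.1, y.2 + 1) ∈ T) :
    PartialFlight T c y (insert (y.1, y.2 + 1) (insert y P)) := by
  induction h with
  | refl c hmem =>
      have := PartialFlight.step c.1 c.2 y.1 y.2 y {y} hmem hy hyl hyd hycl hyu
        (PartialFlight.refl y hy)
      refine this.congr ?_
      ext p; simp; tauto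
  | step i j i' j' m P hmem hmem' hleft hdiag hclosest hup hrec ih =>
      have := PartialFlight.step i j i' j' y (insert (y.1, y.2+1) (insert y P))
        hmem hmem' hleft hdiag hclosest hup (ih hyl hyd hycl)
      refine this.congr ?_
      ext p; simp; tauto

/-- Peel the bottom step off a partial flight. -/
theorem PartialFlight.peel {T : Finset Cell} {c m : Cell} {P : Finset Cell}
    (h : PartialFlight T c m P) :
    (c = m ∧ P = {c}) ∨
    ∃ m₁ P₁, PartialFlight T c m₁ P₁ ∧ m.1 < m₁.1 ∧ m.1 + m.2 + 1 = m₁.1 + m₁.2 ∧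
      (∀ d ∈ T, d.1 < m₁.1 → d.1 + d.2 + 1 = m₁.1 + m₁.2 → d.1 ≤ m.1) ∧
      (m.1, m.2 + 1) ∈ T ∧ P = insert (m.1, m.2 + 1) (insert m P₁) ∧
      P₁ ⊆ P ∧ m ∉ P₁ := by
  induction h with
  | refl c hmem => exact Or.inl ⟨rfl, rfl⟩
  | step i j i' j' m P hmem hmem' hleft hdiag hclosest hup hrec ih =>
      right
      rcases ih with ⟨rfl, rfl⟩ | ⟨m₁, P₁, hpf, hl, hd, hcl, hu, hPeq, hsub, hnm⟩
      · -- single step: m = (i', j')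
        refine ⟨(i, j), {(i, j)}, PartialFlight.refl _ hmem, hleft, hdiag, hclosest, hup, ?_, ?_, ?_⟩
        · ext p; simp; tauto
        · intro p hp; simp only [Finset.mem_singleton] at hp; subst hp; simp
        · simp only [Finset.mem_singleton, Ne, Prod.ext_iff]; omega
      · refine ⟨m₁, insert (i, j) (insert (i', j' + 1) P₁),
          PartialFlight.step i j i' j' m₁ P₁ hmem hmem' hleft hdiag hclosest hup hpf,
          hl, hd, hcl, hu, ?_, ?_, ?_⟩
        · rw [hPeq]; ext p; simp; tauto
        · intro p hp; simp only [Finset.mem_insert] at hp ⊢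
          rcases hp with rfl | rfl | hp
          · simp
          · simp
          · right; right; exact hsub hp
        · have hmi' : m.1 < i' := by
            have := hpf.lex_min (i', j') hpf.mem_base.2.2.1
            rcases this with h | h <;> omega
          simp only [Finset.mem_insert, not_or]
          refine ⟨?_, ?_, hnm⟩
          · simp only [Prod.ext_iff, not_and]; omega
          · simp only [Prod.ext_iff, not_and]; omega

/-! ### Analysis of a non-terminating slide -/

theorem slideAux_analysis {T : Finset Cell} {lo α : ℕ} {T' : Finset Cell}
    (h : SlideAux T lo α T') (hT : IsTowerDiagram T) :
    1 ≤ α → lo ≤ α →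
    ∃ c m P, c ∉ T ∧ T' = insert c T ∧ lo ≤ c.1 ∧ α ≤ c.1 + c.2 ∧
      IsTowerDiagram T' ∧ (c.1, c.2 + 1) ∉ T' ∧
      PartialFlight T' c m P ∧ m.1 + m.2 = α ∧ lo ≤ m.1 ∧
      (∀ d ∈ T', lo ≤ d.1 → d.1 < m.1 → d.1 + d.2 + 1 ≠ α) := by
  induction h with
  | s1a lo α h1 h2 =>
      intro hα hlo
      have hnotmem : (α, 0) ∉ T := fun hm => h2 (α, 0) hm (by simpa using hlo) (by simp)
      have hcol : ∀ y, (α, y) ∉ T := by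
        intro y hy
        exact hnotmem ((hT _ hy).2 0 (Nat.zero_le _))
      refine ⟨(α, 0), (α, 0), {(α, 0)}, hnotmem, rfl, by simpa using hlo, by simp, ?_, ?_,
        PartialFlight.refl _ (by simp), by simp, by simpa using hlo, ?_⟩
      · intro d hd
        rcases Finset.mem_insert.1 hd with rfl | hd
        · exact ⟨hα, fun j' hj' => by simp at hj' ⊢; omega⟩
        · exact ⟨(hT d hd).1, fun j' hj' => Finset.mem_insert_of_mem ((hT d hd).2 j' hj')⟩
      · intro hmem
        rcases Finset.mem_insert.1 hmem with heq | hmem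
        · exact absurd (congrArg Prod.snd heq) (by simp)
        · exact hcol 1 hmem
      · intro d hd hlod hdlt hsum
        rcases Finset.mem_insert.1 hd with rfl | hd
        · simp at hdlt
        · exact h1 d hd hlod hsum
  | s2a lo α i j hmem hlo hdiag hmin htop =>
      intro hα hloα
      refine ⟨(i, j + 1), (i, j + 1), {(i, j + 1)}, htop, rfl, hlo, by simp; omega, ?_, ?_,
        PartialFlight.refl _ (by simp), by show i + (j + 1) = α; omega, hlo, ?_⟩
      · intro d hd
        rcases Finset.mem_insert.1 hd with rfl | hd
        · refine ⟨(hT _ hmem).1, fun j' hj' => ?_⟩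
          rcases Nat.lt_or_ge j' (j + 1) with hj | hj
          · exact Finset.mem_insert_of_mem ((hT _ hmem).2 j' (by omega))
          · have : j' = j + 1 := by omega
            subst this; simp
        · exact ⟨(hT d hd).1, fun j' hj' => Finset.mem_insert_of_mem ((hT d hd).2 j' hj')⟩
      · intro hmem2
        rcases Finset.mem_insert.1 hmem2 with heq | hmem2
        · exact absurd (congrArg Prod.snd heq) (by simp)
        · exact htop ((hT _ hmem2).2 (j + 1) (by omega))
      · intro d hd hlod hdlt hsum
        rcases Finset.mem_insert.1 hd with rfl | hd
        · simp at hdlt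
        · have := hmin d hd hlod hsum
          simp at hdlt; omega
  | s1c lo α T' h1 h2 h2' h3 hrec ih =>
      intro hα hlo
      obtain ⟨c, m, P, hcT, rfl, hclo, hcsum, hTD, hcor, hpf, hmsum, hmlo, hrel⟩ :=
        ih (by omega) (le_refl _)
      have hmcol : α + 1 ≤ m.1 := hmlo
      have hccol : α + 1 ≤ c.1 := hclo
      -- extend at the bottom to (α, 0)
      have hstep := hpf.snoc (α, 0)
        (Finset.mem_insert_of_mem h2) (by simpa using by omega) (by simp; omega)
        ?_ (Finset.mem_insert_of_mem h3)
      · refine ⟨c, (α, 0), _, hcT, rfl, by omega, by omega, hTD, hcor, hstep, by simp, by simpa using hlo, ?_⟩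
        intro d hd hlod hdlt hsum
        rcases Finset.mem_insert.1 hd with rfl | hd
        · simp at hdlt; omega
        · exact h1 d hd hlod hsum
      · -- closest condition
        intro d hd hdlt hdsum
        rcases Finset.mem_insert.1 hd with rfl | hd
        · omega
        · by_contra hgt
          push_neg at hgt
          simp only at hgt
          exact hrel d (Finset.mem_insert_of_mem hd) (by omega) hdlt (by omega)
  | s2c lo α i j T' hmem hlo hdiag hmin h1 h2 hrec ih =>
      intro hα hloα
      obtain ⟨c, m, P, hcT, rfl, hclo, hcsum, hTD, hcor, hpf, hmsum, hmlo, hrel⟩ :=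
        ih (by omega) (by omega)
      have hmcol : i + 1 ≤ m.1 := hmlo
      have hccol : i + 1 ≤ c.1 := hclo
      have hstep := hpf.snoc (i, j + 1)
        (Finset.mem_insert_of_mem h1) (by simp; omega) (by simp; omega)
        ?_ (Finset.mem_insert_of_mem h2)
      · refine ⟨c, (i, j + 1), _, hcT, rfl, by omega, by omega, hTD, hcor, hstep, by simp; omega, hlo, ?_⟩
        intro d hd hlod hdlt hsum
        rcases Finset.mem_insert.1 hd with rfl | hd
        · simp at hdlt; omega
        · have := hmin d hd hlod hsum
          simp at hdlt; omega
      · intro d hd hdlt hdsum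
        rcases Finset.mem_insert.1 hd with rfl | hd
        · omega
        · by_contra hgt
          push_neg at hgt
          simp only at hgt
          exact hrel d (Finset.mem_insert_of_mem hd) (by omega) hdlt (by omega)

/-- Core forward lemma: a non-terminating slide adds one corner cell whose
flight number is the slid letter. -/
theorem slides_analysis {T : Finset Cell} {α : ℕ} {T' : Finset Cell}
    (h : Slides T α T') (hT : IsTowerDiagram T) (hα : 1 ≤ α) :
    ∃ c, c ∉ T ∧ T' = insert c T ∧ IsTowerDiagram T' ∧
      IsCornerCell T' c ∧ FlightNumber T' c α := by
  obtain ⟨c, m, P, hcT, rfl, _, _, hTD, hcor, hpf, hmsum, _, hrel⟩ :=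
    slideAux_analysis h hT hα (Nat.zero_le _)
  have hFP : FlightPath (insert c T) m {m} := by
    obtain ⟨hmT, hmP, hcP, hcT'⟩ := hpf.mem_base
    have hd2 : ∀ d ∈ insert c T, ¬(d.1 < m.1 ∧ d.1 + d.2 + 1 = m.1 + m.2) := by
      intro d hd hcontra
      exact hrel d hd (Nat.zero_le _) hcontra.1 (by omega)
    have := FlightPath.direct (T := insert c T) m.1 m.2 (by simpa using hmT) hd2
    simpa using this
  have hFull : FlightPath (insert c T) c P := by
    have := hpf.comp hFP
    have hPeq : P ∪ {m} = P := by
      apply Finset.union_eq_left.2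
      simp [hpf.mem_base.2.1]
    rwa [hPeq] at this
  refine ⟨c, hcT, rfl, hTD, ⟨Finset.mem_insert_self _ _, hcor, P, hFull⟩, P, hFull,
    m, hpf.mem_base.2.1, hmsum, hpf.lex_min⟩

/-! ### Determinism -/

theorem slideAux_det {T : Finset Cell} {lo α : ℕ} {T₁ : Finset Cell}
    (h₁ : SlideAux T lo α T₁) : ∀ {T₂}, SlideAux T lo α T₂ → T₁ = T₂ := by
  induction h₁ with
  | s1a lo α h1 h2 =>
      intro T₂ h'
      cases h' with
      | s1a => rfl
      | s1c _ _ _ h1' h2' h2'' h3' => exact (h2 _ h2' (by simpa using h2'') (by simp)).elim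
      | s2a _ _ i j hmem hlo hdiag => exact absurd hdiag (h1 _ hmem hlo)
      | s2c _ _ i j _ hmem hlo hdiag => exact absurd hdiag (h1 _ hmem hlo)
  | s1c lo α T' h1 h2 h2' h3 hrec ih =>
      intro T₂ h'
      cases h' with
      | s1a _ _ h1' h2'' => exact (h2'' _ h2 (by simpa using h2') (by simp)).elim
      | s1c _ _ _ h1' h2'' h2''' h3' hrec' => exact ih hrec'
      | s2a _ _ i j hmem hlo hdiag => exact absurd hdiag (h1 _ hmem hlo)
      | s2c _ _ i j _ hmem hlo hdiag => exact absurd hdiag (h1 _ hmem hlo)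
  | s2a lo α i j hmem hlo hdiag hmin htop =>
      intro T₂ h'
      cases h' with
      | s1a _ _ h1' => exact absurd hdiag (h1' _ hmem hlo)
      | s1c _ _ _ h1' => exact absurd hdiag (h1' _ hmem hlo)
      | s2a _ _ i' j' hmem' hlo' hdiag' hmin' htop' =>
          have hii : i = i' := le_antisymm (hmin _ hmem' hlo' hdiag') (hmin' _ hmem hlo hdiag)
          have hjj : j = j' := by omega
          rw [hii, hjj]
      | s2c _ _ i' j' _ hmem' hlo' hdiag' hmin' h1' =>
          have hii : i = i' := le_antisymm (hmin _ hmem' hlo' hdiag') (hmin' _ hmem hlo hdiag)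
          have hjj : j = j' := by omega
          exact absurd (hii ▸ hjj ▸ h1') htop
  | s2c lo α i j T' hmem hlo hdiag hmin h1 h2 hrec ih =>
      intro T₂ h'
      cases h' with
      | s1a _ _ h1' => exact absurd hdiag (h1' _ hmem hlo)
      | s1c _ _ _ h1' => exact absurd hdiag (h1' _ hmem hlo)
      | s2a _ _ i' j' hmem' hlo' hdiag' hmin' htop' =>
          have hii : i = i' := le_antisymm (hmin _ hmem' hlo' hdiag') (hmin' _ hmem hlo hdiag)
          have hjj : j = j' := by omega
          exact absurd (hii ▸ hjj ▸ h1) htop'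
      | s2c _ _ i' j' _ hmem' hlo' hdiag' hmin' h1' h2' hrec' =>
          have hii : i = i' := le_antisymm (hmin _ hmem' hlo' hdiag') (hmin' _ hmem hlo hdiag)
          subst hii
          exact ih hrec'

theorem srdiagram_inv_nil {w : List ℕ} {T : Finset Cell} (h : SRDiagram w T)
    (hw : w = []) : T = ∅ := by
  cases h with
  | nil => rfl
  | snoc hw' ha' => simp at hw

theorem srdiagram_inv_snoc' {v : List ℕ} {T : Finset Cell} (h : SRDiagram v T) :
    ∀ w a, v = w ++ [a] → ∃ T₀, SRDiagram w T₀ ∧ Slides T₀ a T := by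
  cases h with
  | nil => intro w a hv; exact absurd hv.symm (by simp)
  | snoc hw' ha' =>
      intro w a hv
      obtain ⟨rfl, heq⟩ := List.append_inj' hv rfl
      obtain rfl : _ = a := by simpa using heq
      exact ⟨_, hw', ha'⟩

theorem srdiagram_inv_snoc {w : List ℕ} {a : ℕ} {T : Finset Cell}
    (h : SRDiagram (w ++ [a]) T) : ∃ T₀, SRDiagram w T₀ ∧ Slides T₀ a T :=
  srdiagram_inv_snoc' h w a rfl

theorem srdiagram_det {w : List ℕ} {T₁ : Finset Cell} (h₁ : SRDiagram w T₁) :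
    ∀ {T₂}, SRDiagram w T₂ → T₁ = T₂ := by
  induction h₁ with
  | nil => intro T₂ h'; exact (srdiagram_inv_nil h' rfl).symm
  | snoc hw ha ih =>
      intro T₂ h'
      obtain ⟨T₀, hw', ha'⟩ := srdiagram_inv_snoc h'
      have := ih hw'
      subst this
      exact slideAux_det ha ha'

theorem srrecord_shape {w : List ℕ} {R : Finset (Cell × ℕ)} (h : SRRecord w R) :
    SRDiagram w (shapeOf R) := by
  induction h with
  | nil => simpa [shapeOf] using SRDiagram.nil
  | snoc hw hc ha ih =>
      rename_i w' R' a' c'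
      have hsh : shapeOf (insert (c', w'.length + 1) R') = insert c' (shapeOf R') := by
        simp [shapeOf, Finset.image_insert]
      rw [hsh]; exact SRDiagram.snoc ih ha

/-! ### From a flight path back to a slide -/

theorem pf_slideAux {T' : Finset Cell} (hT' : IsTowerDiagram T') {c : Cell}
    (hcor : (c.1, c.2 + 1) ∉ T') :
    ∀ n P m lo, P.card ≤ n → PartialFlight T' c m P → lo ≤ m.1 →
      (∀ d ∈ T', lo ≤ d.1 → d.1 < m.1 → d.1 + d.2 + 1 ≠ m.1 + m.2) →
      SlideAux (T'.erase c) lo (m.1 + m.2) T' := by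
  intro n
  induction n with
  | zero =>
      intro P m lo hcard hpf
      have hmem := hpf.mem_base.2.1
      have hne : P.Nonempty := ⟨m, hmem⟩
      have := Finset.card_pos.2 hne
      omega
  | succ n ih =>
      intro P m lo hcard hpf hlom hrel
      have hcT' : c ∈ T' := hpf.mem_base.2.2.2
      rcases hpf.peel with ⟨rfl, rfl⟩ | ⟨m₁, P₁, hpf₁, hl, hd, hcl, hu, hPeq, hsub, hnm⟩
      · -- base case : the partial flight is trivial, c = m
        obtain ⟨p, q⟩ := c
        have hcor' : (p, q + 1) ∉ T' := hcor
        have hlom' : lo ≤ p := hlom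
        have hrel' : ∀ d ∈ T', lo ≤ d.1 → d.1 < p → d.1 + d.2 + 1 ≠ p + q := hrel
        rcases q with _ | q
        · -- c = (p, 0)
          have h1 : ∀ d ∈ T'.erase (p, 0), lo ≤ d.1 → d.1 + d.2 + 1 ≠ p + 0 := by
            intro d hd hlod
            have hdT := Finset.mem_of_mem_erase hd
            rcases Nat.lt_or_ge d.1 p with hlt | hge
            · exact hrel' d hdT hlod hlt
            · omega
          have h2 : ∀ d ∈ T'.erase (p, 0), lo ≤ d.1 → d.1 + d.2 ≠ p + 0 := by
            intro d hd hlod hsum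
            have hdT := Finset.mem_of_mem_erase hd
            rcases Nat.lt_or_ge d.1 p with hlt | hge
            · have hd2 : 1 ≤ d.2 := by omega
              have hbelow : (d.1, d.2 - 1) ∈ T' := (hT' d hdT).2 (d.2 - 1) (by omega)
              exact hrel' (d.1, d.2 - 1) hbelow (by simpa using hlod) (by simpa using hlt)
                (by simp; omega)
            · have hd1 : d.1 = p := by omega
              have hd0 : d = (p, 0) := Prod.ext hd1 (by omega)
              exact (Finset.mem_erase.1 hd).1 hd0
          have hs := SlideAux.s1a (T := T'.erase (p, 0)) lo (p + 0) h1 h2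
          have heq : ((p + 0, 0) : Cell) = (p, 0) := by simp
          rw [heq, Finset.insert_erase hcT'] at hs
          exact hs
        · -- c = (p, q + 1)
          have hbelow : (p, q) ∈ T' := (hT' _ hcT').2 q (by simp)
          have hbe : (p, q) ∈ T'.erase (p, q + 1) :=
            Finset.mem_erase.2 ⟨by simp [Prod.ext_iff], hbelow⟩
          have hmin : ∀ d ∈ T'.erase (p, q + 1), lo ≤ d.1 →
              d.1 + d.2 + 1 = p + (q + 1) → p ≤ d.1 := by
            intro d hd hlod hsum
            by_contra hlt
            exact hrel' d (Finset.mem_of_mem_erase hd) hlod (by omega) (by omega)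
          have htop : (p, q + 1) ∉ T'.erase (p, q + 1) := by simp
          have hs := SlideAux.s2a (T := T'.erase (p, q + 1)) lo (p + (q + 1))
            p q hbe hlom' (by omega) hmin htop
          rw [Finset.insert_erase hcT'] at hs
          exact hs
      · -- zigzag case : peel gives the bottom step m → m₁
        have hm₁c : m₁.1 ≤ c.1 := by
          rcases hpf₁.lex_min c hpf₁.mem_base.2.2.1 with h | h <;> omega
        have hmT : m ∈ T' := hpf.mem_base.1
        have hcard₁ : P₁.card ≤ n := by
          have hss : P₁ ⊂ P := ⟨hsub, fun hPP => hnm (hPP hpf.mem_base.2.1)⟩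
          have := Finset.card_lt_card hss
          omega
        have hrel₁ : ∀ d ∈ T', m.1 + 1 ≤ d.1 → d.1 < m₁.1 → d.1 + d.2 + 1 ≠ m₁.1 + m₁.2 := by
          intro d hd hlod hlt hsum
          have := hcl d hd hlt hsum
          omega
        have hrec := ih P₁ m₁ (m.1 + 1) hcard₁ hpf₁ (by omega) hrel₁
        obtain ⟨p, q⟩ := m
        have hmc : p < c.1 := by have : (p, q).1 < m₁.1 := hl; simp at this; omega
        have hl' : p < m₁.1 := hl
        have hd' : p + q + 1 = m₁.1 + m₁.2 := hd
        have hu' : (p, q + 1) ∈ T' := hu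
        have hlom' : lo ≤ p := hlom
        have hrel' : ∀ d ∈ T', lo ≤ d.1 → d.1 < p → d.1 + d.2 + 1 ≠ p + q := hrel
        have hrec' : SlideAux (T'.erase c) (p + 1) (m₁.1 + m₁.2) T' := hrec
        have hne : ∀ y : ℕ, ((p, y) : Cell) ≠ c := by
          intro y h
          have : p = c.1 := congrArg Prod.fst h
          omega
        have hmTe : (p, q) ∈ T'.erase c := Finset.mem_erase.2 ⟨hne q, hmT⟩
        have huTe : (p, q + 1) ∈ T'.erase c := Finset.mem_erase.2 ⟨hne (q + 1), hu'⟩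
        rcases q with _ | q
        · -- m = (p, 0) : rule s1c
          refine SlideAux.s1c lo (p + 0) T' ?_ ?_ (by omega) ?_ ?_
          · intro d hd hlod
            have hdT := Finset.mem_of_mem_erase hd
            rcases Nat.lt_or_ge d.1 p with hlt | hge
            · exact hrel' d hdT hlod hlt
            · omega
          · have heq : ((p + 0, 0) : Cell) = (p, 0) := by simp
            rw [heq]; exact hmTe
          · have heq : ((p + 0, 1) : Cell) = (p, 0 + 1) := by simp
            rw [heq]; exact huTe
          · exact ((by omega : m₁.1 + m₁.2 = p + 0 + 1) ▸ hrec' :)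
        · -- m = (p, q + 1) : rule s2c
          have hbelow : (p, q) ∈ T' := (hT' _ hmT).2 q (by simp)
          have hbeTe : (p, q) ∈ T'.erase c := Finset.mem_erase.2 ⟨hne q, hbelow⟩
          refine SlideAux.s2c lo (p + (q + 1)) p q T' hbeTe hlom' (by omega) ?_ hmTe ?_ ?_
          · intro d hd hlod hsum
            by_contra hlt
            exact hrel' d (Finset.mem_of_mem_erase hd) hlod (by omega) (by omega)
          · exact huTe
          · exact ((by omega : m₁.1 + m₁.2 = p + (q + 1) + 1) ▸ hrec' :)

/-- Core reverse lemma: removing a corner cell and sliding back its flight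
number recovers the diagram. -/
theorem corner_slides {T' : Finset Cell} (hT' : IsTowerDiagram T') {c : Cell}
    (hc : IsCornerCell T' c) :
    ∃ α m P, PartialFlight T' c m P ∧ α = m.1 + m.2 ∧ 1 ≤ α ∧
      FlightNumber T' c α ∧ Slides (T'.erase c) α T' := by
  obtain ⟨hcT, hcor, P, hFP⟩ := hc
  obtain ⟨m, hpf, hnone⟩ := hFP.to_partial
  refine ⟨m.1 + m.2, m, P, hpf, rfl, ?_, ⟨P, hFP, m, hpf.mem_base.2.1, rfl, hpf.lex_min⟩, ?_⟩
  · have := (hT' m hpf.mem_base.1).1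
    omega
  · exact pf_slideAux hT' hcor P.card P m 0 (le_refl _) hpf (Nat.zero_le _)
      (fun d hd _ hlt hsum => hnone d hd ⟨hlt, hsum⟩)

/-! ### Bookkeeping on tableaux -/

theorem shapeOf_insert (c : Cell) (k : ℕ) (R : Finset (Cell × ℕ)) :
    shapeOf (insert (c, k) R) = insert c (shapeOf R) := by
  simp [shapeOf, Finset.image_insert]

theorem mem_shapeOf {c : Cell} {R : Finset (Cell × ℕ)} :
    c ∈ shapeOf R ↔ ∃ k, (c, k) ∈ R := by
  simp only [shapeOf, Finset.mem_image]
  constructor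
  · rintro ⟨⟨d, k⟩, hd, rfl⟩; exact ⟨k, hd⟩
  · rintro ⟨k, hk⟩; exact ⟨(c, k), hk, rfl⟩

theorem tableau_label_bounds {R : Finset (Cell × ℕ)} (h : IsTowerTableau R) :
    ∀ p ∈ R, 1 ≤ p.2 ∧ p.2 ≤ R.card := by
  intro p hp
  have : p.2 ∈ R.image Prod.snd := Finset.mem_image_of_mem _ hp
  rw [h.2.2, Finset.mem_Icc] at this
  exact this

theorem tableau_snd_inj {R : Finset (Cell × ℕ)} (h : IsTowerTableau R) :
    ∀ p ∈ R, ∀ q ∈ R, p.2 = q.2 → p = q := by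
  have hcard : (R.image Prod.snd).card = R.card := by
    rw [h.2.2, Nat.card_Icc]; omega
  have hinj := Finset.card_image_iff.1 hcard
  intro p hp q hq hpq
  exact hinj (Finset.mem_coe.2 hp) (Finset.mem_coe.2 hq) hpq

theorem labelLE_insert_top {R : Finset (Cell × ℕ)} {c : Cell} {n : ℕ}
    (hlab : ∀ p ∈ R, p.2 ≤ n) {k : ℕ} (hk : k ≤ n) :
    labelLE (insert (c, n + 1) R) k = labelLE R k := by
  ext p
  simp only [labelLE, Finset.mem_filter, Finset.mem_insert]
  constructor
  · rintro ⟨rfl | hp, hpk⟩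
    · omega
    · exact ⟨hp, hpk⟩
  · rintro ⟨hp, hpk⟩; exact ⟨Or.inr hp, hpk⟩

theorem labelLE_all {R : Finset (Cell × ℕ)} {n : ℕ} (hlab : ∀ p ∈ R, p.2 ≤ n) :
    labelLE R n = R := by
  ext p
  simp only [labelLE, Finset.mem_filter]
  exact ⟨fun h => h.1, fun h => ⟨h, hlab p h⟩⟩

theorem empty_std : IsStandardTowerTableau (∅ : Finset (Cell × ℕ)) := by
  refine ⟨⟨?_, ?_, ?_⟩, ?_⟩
  · intro c hc; simp [shapeOf] at hc
  · intro p hp; simp at hp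
  · simp
  · intro p hp; simp at hp

/-! ### Part 1 : the recording tableau of a non-terminating word -/

theorem srw_part1 : ∀ w : List ℕ, IsPosWord w → (∃ T, SRDiagram w T) →
    ∃ R : Finset (Cell × ℕ), SRRecord w R ∧ IsStandardTowerTableau R ∧ ReadsTo R w := by
  intro w
  induction w using List.reverseRecOn with
  | nil =>
      intro _ _
      refine ⟨∅, SRRecord.nil, empty_std, by simp [ReadsTo], ?_⟩
      intro k
      exact absurd k.2 (by simp)
  | append_singleton w a ih =>
      intro hpos hT
      obtain ⟨T, hTd⟩ := hT
      obtain ⟨T₀, hT₀, hsl⟩ := srdiagram_inv_snoc hTd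
      have hposw : IsPosWord w := fun b hb => hpos b (by simp [hb])
      have ha1 : 1 ≤ a := hpos a (by simp)
      obtain ⟨R₀, hrec₀, hstd₀, hread₀⟩ := ih hposw ⟨T₀, hT₀⟩
      have hshape : shapeOf R₀ = T₀ := srdiagram_det (srrecord_shape hrec₀) hT₀
      have hsl' : Slides (shapeOf R₀) a T := hshape ▸ hsl
      obtain ⟨c, hcT, rfl, hTD, hcor, hFN⟩ := slides_analysis hsl' hstd₀.1.1 ha1
      set n := w.length with hn
      have hcard₀ : R₀.card = n := (hread₀.1).symm
      have hlab : ∀ p ∈ R₀, 1 ≤ p.2 ∧ p.2 ≤ n :=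
        fun p hp => hcard₀ ▸ tableau_label_bounds hstd₀.1 p hp
      have hcn : (c, n + 1) ∉ R₀ := fun h => hcT (mem_shapeOf.2 ⟨n + 1, h⟩)
      refine ⟨insert (c, n + 1) R₀, ?_, ?_, ?_⟩
      · exact SRRecord.snoc hrec₀ hcT hsl'
      · -- standardness
        set R := insert (c, n + 1) R₀ with hR
        have hshR : shapeOf R = insert c (shapeOf R₀) := shapeOf_insert _ _ _
        have hcardR : R.card = n + 1 := by rw [hR, Finset.card_insert_of_notMem hcn, hcard₀]
        have hlabR : ∀ p ∈ R, p.2 ≤ n + 1 := by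
          intro p hp
          rcases Finset.mem_insert.1 hp with rfl | hp
          · simp
          · exact le_trans (hlab p hp).2 (by omega)
        have htab : IsTowerTableau R := by
          refine ⟨hshR ▸ hTD, ?_, ?_⟩
          · intro p hp q hq hpq
            rcases Finset.mem_insert.1 hp with rfl | hp <;>
              rcases Finset.mem_insert.1 hq with rfl | hq
            · rfl
            · have hcq : c = q.1 := hpq
              exact absurd (mem_shapeOf.2 ⟨q.2, by rw [hcq, Prod.mk.eta]; exact hq⟩) hcT
            · have hcq : c = p.1 := hpq.symm
              exact absurd (mem_shapeOf.2 ⟨p.2, by rw [hcq, Prod.mk.eta]; exact hp⟩) hcT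
            · exact hstd₀.1.2.1 p hp q hq hpq
          · rw [hR, Finset.image_insert, hcardR, hstd₀.1.2.2, hcard₀]
            exact Finset.insert_Icc_right_eq_Icc_add_one (by omega)
        refine ⟨htab, ?_⟩
        intro p hp
        rcases Finset.mem_insert.1 hp with rfl | hp
        · rw [labelLE_all hlabR, hshR]
          exact ⟨hTD, hcor⟩
        · have hpn : p.2 ≤ n := (hlab p hp).2
          rw [labelLE_insert_top (fun q hq => (hlab q hq).2) hpn]
          exact hstd₀.2 p hp
      · -- reading word
        set R := insert (c, n + 1) R₀ with hR
        have hcardR : R.card = n + 1 := by rw [hR, Finset.card_insert_of_notMem hcn, hcard₀]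
        have hlabR : ∀ p ∈ R, p.2 ≤ n + 1 := by
          intro p hp
          rcases Finset.mem_insert.1 hp with rfl | hp
          · simp
          · exact le_trans (hlab p hp).2 (by omega)
        refine ⟨by simp [hcardR, hn], ?_⟩
        intro k c' hc'
        have hklen : (k : ℕ) < n + 1 := by simpa [hn] using k.2
        rcases Nat.lt_or_ge (k : ℕ) n with hk | hk
        · have hc'R₀ : (c', (k : ℕ) + 1) ∈ R₀ := by
            rcases Finset.mem_insert.1 hc' with heq | h
            · exact absurd (congrArg Prod.snd heq) (by simp; omega)
            · exact h
          have hll : labelLE R ((k : ℕ) + 1) = labelLE R₀ ((k : ℕ) + 1) :=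
            labelLE_insert_top (fun q hq => (hlab q hq).2) (by omega)
          have hget : (w ++ [a]).get k = w.get ⟨(k : ℕ), by omega⟩ := by
            simp only [List.get_eq_getElem]
            rw [List.getElem_append_left]
          rw [hll, hget]
          exact hread₀.2 ⟨(k : ℕ), by omega⟩ c' hc'R₀
        · have hkn : (k : ℕ) = n := by omega
          have hc'c : c' = c := by
            rcases Finset.mem_insert.1 hc' with heq | h
            · exact congrArg Prod.fst heq
            · exact absurd ((hlab _ h).2) (by simp; omega)
          have hll : labelLE R ((k : ℕ) + 1) = R := by
            rw [hkn]; exact labelLE_all hlabR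
          have hget : (w ++ [a]).get k = a := by
            simp only [List.get_eq_getElem]
            rw [List.getElem_append_right (by omega)]
            simp [hkn]

          rw [hll, hget, hc'c, shapeOf_insert]
          exact hFN

/-! ### Part 2 : every standard tower tableau is the record of its reading word -/

theorem srw_part2 : ∀ R : Finset (Cell × ℕ), IsStandardTowerTableau R →
    ∃ w : List ℕ, IsPosWord w ∧ ReadsTo R w ∧ SRRecord w R := by
  intro R
  induction R using Finset.strongInduction with
  | _ R ih =>
    intro hstd
    rcases eq_or_ne R ∅ with rfl | hR
    · refine ⟨[], fun a ha => absurd ha (by simp), ⟨by simp, ?_⟩, SRRecord.nil⟩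
      intro k
      exact absurd k.2 (by simp)
    · set n := R.card with hn
      have hn1 : 1 ≤ n := Finset.card_pos.2 (Finset.nonempty_of_ne_empty hR)
      have hlab : ∀ p ∈ R, 1 ≤ p.2 ∧ p.2 ≤ n := tableau_label_bounds hstd.1
      have hsnd := tableau_snd_inj hstd.1
      have hfst := hstd.1.2.1
      -- the cell labelled n
      have hnn : n ∈ R.image Prod.snd := by rw [hstd.1.2.2]; simp [Finset.mem_Icc]; omega
      obtain ⟨pc, hpcR, hpc2⟩ := Finset.mem_image.1 hnn
      obtain ⟨c, l⟩ := pc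
      obtain rfl : l = n := hpc2
      set R₀ := R.erase (c, n) with hR₀
      have hss : R₀ ⊂ R := Finset.erase_ssubset hpcR
      have hcard₀ : R₀.card = n - 1 := by rw [hR₀, Finset.card_erase_of_mem hpcR]
      -- lower subtableaux agree
      have hllE : ∀ k, k < n → labelLE R k = labelLE R₀ k := by
        intro k hk
        ext p
        simp only [labelLE, hR₀, Finset.mem_filter, Finset.mem_erase]
        constructor
        · rintro ⟨hp, hpk⟩
          refine ⟨⟨?_, hp⟩, hpk⟩
          rintro rfl
          simp at hpk; omega
        · rintro ⟨⟨_, hp⟩, hpk⟩; exact ⟨hp, hpk⟩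
      have hlabtop : ∀ p ∈ R, p.2 ≤ n := fun p hp => (hlab p hp).2
      have hlltop : labelLE R n = R := labelLE_all hlabtop
      -- R₀ is the subtableau with labels ≤ n - 1
      have hR₀l : R₀ = labelLE R (n - 1) := by
        ext p
        simp only [labelLE, hR₀, Finset.mem_filter, Finset.mem_erase]
        constructor
        · rintro ⟨hpne, hp⟩
          refine ⟨hp, ?_⟩
          have := (hlab p hp).2
          rcases Nat.lt_or_ge p.2 n with h | h
          · omega
          · have : p.2 = n := by omega
            exact absurd (hsnd p hp (c, n) hpcR (by simpa using this)) hpne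
        · rintro ⟨hp, hpk⟩
          refine ⟨?_, hp⟩
          rintro rfl
          simp at hpk; omega
      -- R₀ is standard
      have hstd₀ : IsStandardTowerTableau R₀ := by
        refine ⟨⟨?_, ?_, ?_⟩, ?_⟩
        · rcases Nat.lt_or_ge 1 n with h | h
          · have hn1' : n - 1 ∈ R.image Prod.snd := by
              rw [hstd.1.2.2]; simp [Finset.mem_Icc]; omega
            obtain ⟨p₀, hp₀R, hp₀2⟩ := Finset.mem_image.1 hn1'
            have := (hstd.2 p₀ hp₀R).1
            rw [hp₀2] at this
            rwa [hR₀l]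
          · have : n = 1 := by omega
            have hempty : R₀ = ∅ := by
              rw [hR₀l]
              ext p
              simp only [labelLE, Finset.mem_filter, Finset.notMem_empty, iff_false]
              rintro ⟨hp, hpk⟩
              have := (hlab p hp).1
              omega
            rw [hempty]
            intro d hd; simp [shapeOf] at hd
        · intro p hp q hq
          exact hfst p (Finset.mem_of_mem_erase hp) q (Finset.mem_of_mem_erase hq)
        · -- labels of R₀
          have : R₀.image Prod.snd = (R.image Prod.snd).erase n := by
            ext k
            simp only [Finset.mem_image, Finset.mem_erase, hR₀, Finset.mem_erase]
            constructor
            · rintro ⟨p, ⟨hpne, hp⟩, rfl⟩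
              refine ⟨?_, p, hp, rfl⟩
              intro hk
              exact hpne (hsnd p hp (c, n) hpcR (by simpa using hk))
            · rintro ⟨hkne, p, hp, rfl⟩
              refine ⟨p, ⟨?_, hp⟩, rfl⟩
              rintro rfl
              simp at hkne
          rw [this, hstd.1.2.2, hcard₀, ← hn]
          ext k
          simp only [Finset.mem_erase, Finset.mem_Icc]
          omega
        · intro p hp
          have hpn : p.2 < n := by
            have h2 := (hlab p (Finset.mem_of_mem_erase hp)).2
            rcases Nat.lt_or_ge p.2 n with h | h
            · exact h
            · have : p.2 = n := by omega
              exact absurd (hsnd p (Finset.mem_of_mem_erase hp) (c, n) hpcR (by simpa using this))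
                (Finset.mem_erase.1 hp).1
          rw [← hllE p.2 hpn]
          exact hstd.2 p (Finset.mem_of_mem_erase hp)
      obtain ⟨w₀, hpos₀, hread₀, hrec₀⟩ := ih R₀ hss hstd₀
      have hw₀len : w₀.length = n - 1 := by rw [hread₀.1, hcard₀]
      -- corner data for c in shapeOf R
      have hcmem : c ∈ shapeOf R := mem_shapeOf.2 ⟨n, hpcR⟩
      have hcorn := hstd.2 (c, n) hpcR
      rw [hlltop] at hcorn
      obtain ⟨hTD, hcor⟩ := hcorn
      obtain ⟨α, m, P, hpf, hαm, hα1, hFN, hslides⟩ := corner_slides hTD hcor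
      -- shape of R₀
      have hsh₀ : shapeOf R₀ = (shapeOf R).erase c := by
        ext d
        constructor
        · intro hd
          obtain ⟨k, hk⟩ := mem_shapeOf.1 hd
          have hkR := Finset.mem_of_mem_erase hk
          refine Finset.mem_erase.2 ⟨?_, mem_shapeOf.2 ⟨k, hkR⟩⟩
          rintro rfl
          have heq : (d, k) = (d, n) := hfst (d, k) hkR (d, n) hpcR rfl
          exact (Finset.mem_erase.1 hk).1 heq
        · intro hd
          obtain ⟨hdc, hdm⟩ := Finset.mem_erase.1 hd
          obtain ⟨k, hk⟩ := mem_shapeOf.1 hdm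
          refine mem_shapeOf.2 ⟨k, Finset.mem_erase.2 ⟨?_, hk⟩⟩
          intro h
          exact hdc (congrArg Prod.fst h)
      refine ⟨w₀ ++ [α], ?_, ?_, ?_⟩
      · intro b hb
        rcases List.mem_append.1 hb with hb | hb
        · exact hpos₀ b hb
        · simp at hb; omega
      · -- ReadsTo R (w₀ ++ [α])
        refine ⟨by simp [hw₀len, ← hn]; omega, ?_⟩
        intro k c' hc'
        have hklen : (k : ℕ) < n := by
          have := k.2
          simp [hw₀len] at this
          omega
        rcases Nat.lt_or_ge ((k : ℕ) + 1) n with hk | hk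
        · have hc'R₀ : (c', (k : ℕ) + 1) ∈ R₀ := by
            refine Finset.mem_erase.2 ⟨?_, hc'⟩
            intro h
            have := congrArg Prod.snd h
            simp at this; omega
          have hget : (w₀ ++ [α]).get k = w₀.get ⟨(k : ℕ), by omega⟩ := by
            simp only [List.get_eq_getElem]
            rw [List.getElem_append_left]
          rw [hllE ((k : ℕ) + 1) hk, hget]
          exact hread₀.2 ⟨(k : ℕ), by omega⟩ c' hc'R₀
        · have hkn : (k : ℕ) = n - 1 := by omega
          have hc'c : c' = c := by
            have := hsnd (c', (k : ℕ) + 1) hc' (c, n) hpcR (by simp; omega)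
            exact congrArg Prod.fst this
          have hll : labelLE R ((k : ℕ) + 1) = R := by
            have : (k : ℕ) + 1 = n := by omega
            rw [this, hlltop]
          have hget : (w₀ ++ [α]).get k = α := by
            simp only [List.get_eq_getElem]
            rw [List.getElem_append_right (by omega)]
            simp [hkn, hw₀len]
          rw [hll, hget, hc'c]
          exact hFN
      · -- SRRecord
        have hcns : c ∉ shapeOf R₀ := by rw [hsh₀]; simp
        have hsl : Slides (shapeOf R₀) α (insert c (shapeOf R₀)) := by
          rw [hsh₀, Finset.insert_erase hcmem]
          exact hslides
        have := SRRecord.snoc hrec₀ hcns hsl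
        have hRins : insert (c, w₀.length + 1) R₀ = R := by
          rw [hw₀len]
          have : n - 1 + 1 = n := by omega
          rw [this, hR₀, Finset.insert_erase hpcR]
        rwa [hRins] at this


/-- The maps `α ↦ R(α)` and `R ↦ Read(R)` are mutually inverse
bijections between `SRW(ℤ⁺)` and the set of all standard tower tableaux. -/
theorem srw_stt_bijection :
    (∀ w : List ℕ, IsPosWord w → (∃ T, SRDiagram w T) →
        ∃ R : Finset (Cell × ℕ),
          SRRecord w R ∧ IsStandardTowerTableau R ∧ ReadsTo R w) ∧
      (∀ R : Finset (Cell × ℕ), IsStandardTowerTableau R →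
        ∃ w : List ℕ, IsPosWord w ∧ ReadsTo R w ∧ SRRecord w R) := by
  exact ⟨srw_part1, srw_part2⟩
end

section
/- Let α = α₁...αₙ and β = β₁...βₙ be two words in SRW(ℤ⁺). If s_[α] = s_[β] (the two words represent the same permutation), then shape(R(α)) = shape(R(β)). -/
noncomputable section SS
open Finset

def ssC (M : ℕ) (σ : Equiv.Perm ℕ) (i : ℕ) : ℕ :=
  ((Finset.Ioo i M).filter (fun j => σ j < σ i)).card

def ssB (σ : Equiv.Perm ℕ) (i : ℕ) : ℕ :=
  ((Finset.Iio i).filter (fun j => σ i < σ j)).card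

def ssT (σ : Equiv.Perm ℕ) (a lo : ℕ) : ℕ :=
  ((Finset.Iio lo).filter (fun j => a < σ j)).card

def ssD (M : ℕ) (σ : Equiv.Perm ℕ) : Finset Cell :=
  (Finset.Ioo 0 M ×ˢ Finset.range M).filter (fun c => c.2 < ssC M σ c.1)

lemma ssC_le (M : ℕ) (σ : Equiv.Perm ℕ) (i : ℕ) : ssC M σ i ≤ M := by
  refine le_trans (Finset.card_filter_le _ _) ?_
  rw [Nat.card_Ioo]; omega

lemma mem_ssD {M : ℕ} {σ : Equiv.Perm ℕ} {i j : ℕ} :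
    (i, j) ∈ ssD M σ ↔ 1 ≤ i ∧ i < M ∧ j < ssC M σ i := by
  simp only [ssD, Finset.mem_filter, Finset.mem_product, Finset.mem_Ioo, Finset.mem_range]
  constructor
  · rintro ⟨⟨⟨h1, h2⟩, _⟩, h4⟩; exact ⟨h1, h2, h4⟩
  · rintro ⟨h1, h2, h3⟩
    exact ⟨⟨⟨h1, h2⟩, lt_of_lt_of_le h3 (ssC_le M σ i)⟩, h3⟩

lemma ss_lt_M {M : ℕ} {σ : Equiv.Perm ℕ} (hfix : ∀ x, M ≤ x → σ x = x) {x : ℕ}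
    (hx : x < M) : σ x < M := by
  by_contra h
  push_neg at h
  have h2 := hfix _ h
  have : σ x = x := σ.injective h2
  omega

lemma ss_image_range {M : ℕ} {σ : Equiv.Perm ℕ} (hfix : ∀ x, M ≤ x → σ x = x) :
    (Finset.range M).image σ = Finset.range M := by
  apply Finset.eq_of_subset_of_card_le
  · intro x hx
    simp only [Finset.mem_image, Finset.mem_range] at hx ⊢
    obtain ⟨j, hj, rfl⟩ := hx
    exact ss_lt_M hfix hj
  · rw [Finset.card_image_of_injective _ σ.injective]

lemma ss_d {M : ℕ} {σ : Equiv.Perm ℕ} (hfix : ∀ x, M ≤ x → σ x = x)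
    {i : ℕ} (hiM : i < M) : i + ssC M σ i = σ i + ssB σ i := by
  have hv : ((Finset.range M).filter (fun j => σ j < σ i)).card = σ i := by
    have himg : ((Finset.range M).image σ).filter (fun v => v < σ i)
        = ((Finset.range M).filter (fun j => σ j < σ i)).image σ :=
      Finset.filter_image
    rw [ss_image_range hfix] at himg
    have hrange : (Finset.range M).filter (fun v => v < σ i) = Finset.range (σ i) := by
      ext v
      simp only [Finset.mem_filter, Finset.mem_range]
      have := ss_lt_M hfix hiM
      omega
    rw [hrange] at himg
    have := Finset.card_image_of_injective
      ((Finset.range M).filter (fun j => σ j < σ i)) σ.injective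
    rw [← himg, Finset.card_range] at this
    omega
  have hsplit : (Finset.range M).filter (fun j => σ j < σ i)
      = ((Finset.Iio i).filter (fun j => σ j < σ i)) ∪
        ((Finset.Ioo i M).filter (fun j => σ j < σ i)) := by
    ext j
    simp only [Finset.mem_filter, Finset.mem_union, Finset.mem_range, Finset.mem_Iio,
      Finset.mem_Ioo]
    constructor
    · rintro ⟨hj, hP⟩
      rcases lt_trichotomy j i with h | h | h
      · exact Or.inl ⟨h, hP⟩
      · subst h; omega
      · exact Or.inr ⟨⟨h, hj⟩, hP⟩
    · rintro (⟨h, hP⟩ | ⟨⟨h1, h2⟩, hP⟩)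
      · exact ⟨lt_trans h hiM, hP⟩
      · exact ⟨h2, hP⟩
  have hdisj : Disjoint ((Finset.Iio i).filter (fun j => σ j < σ i))
      ((Finset.Ioo i M).filter (fun j => σ j < σ i)) := by
    apply Finset.disjoint_filter_filter
    rw [Finset.disjoint_left]
    intro x hx hx2
    simp only [Finset.mem_Iio] at hx
    simp only [Finset.mem_Ioo] at hx2
    omega
  have hcard := Finset.card_union_of_disjoint hdisj
  rw [hsplit, hcard] at hv
  have hIio : ((Finset.Iio i).filter (fun j => σ j < σ i)).card + ssB σ i = i := by
    have hneg : (Finset.Iio i).filter (fun j => σ i ≤ σ j)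
        = (Finset.Iio i).filter (fun j => σ i < σ j) := by
      apply Finset.filter_congr
      intro j hj
      simp only [Finset.mem_Iio] at hj
      have hne : σ j ≠ σ i := fun h => absurd (σ.injective h) (by omega)
      constructor
      · intro h; exact lt_of_le_of_ne h (Ne.symm hne)
      · intro h; exact le_of_lt h
    have h3 := Finset.card_filter_add_card_filter_not
      (s := Finset.Iio i) (p := fun j => σ j < σ i)
    simp only [not_lt] at h3
    rw [hneg] at h3
    rw [Nat.card_Iio] at h3
    exact h3
  unfold ssC ssB at *
  omega
lemma ssT_ext (σ : Equiv.Perm ℕ) {a lo k : ℕ} (hlk : lo ≤ k)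
    (Hno : ∀ j, lo ≤ j → j < k → ¬ a < σ j) : ssT σ a k = ssT σ a lo := by
  unfold ssT
  congr 1
  ext j
  simp only [Finset.mem_filter, Finset.mem_Iio]
  constructor
  · rintro ⟨hj, hP⟩
    refine ⟨?_, hP⟩
    by_contra h
    exact Hno j (by omega) hj hP
  · rintro ⟨hj, hP⟩
    exact ⟨by omega, hP⟩

lemma ssT_succ (σ : Equiv.Perm ℕ) {a lo k : ℕ} (hlk : lo ≤ k)
    (Hno : ∀ j, lo ≤ j → j < k → ¬ a < σ j) (hk : a < σ k) :
    ssT σ a (k + 1) = ssT σ a lo + 1 := by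
  have h1 : (Finset.Iio (k+1)).filter (fun j => a < σ j)
      = insert k ((Finset.Iio k).filter (fun j => a < σ j)) := by
    ext j
    simp only [Finset.mem_filter, Finset.mem_Iio, Finset.mem_insert]
    constructor
    · rintro ⟨hj, hP⟩
      rcases Nat.lt_or_ge j k with h | h
      · exact Or.inr ⟨h, hP⟩
      · exact Or.inl (by omega)
    · rintro (rfl | ⟨hj, hP⟩)
      · exact ⟨by omega, hk⟩
      · exact ⟨by omega, hP⟩
  have h2 : k ∉ (Finset.Iio k).filter (fun j => a < σ j) := by
    simp [Finset.mem_filter]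
  unfold ssT
  rw [h1, Finset.card_insert_of_notMem h2]
  have := ssT_ext σ hlk Hno
  unfold ssT at this
  omega

lemma ssL0 {σ : Equiv.Perm ℕ} {a p lo k : ℕ} (hp : σ p = a)
    (hkp : k ≤ p) (hlo : lo ≤ k)
    (Hno : ∀ j, lo ≤ j → j < k → ¬ a < σ j) : k ≤ a + ssT σ a lo := by
  have hne : ∀ j, j < k → σ j ≠ a := by
    intro j hj h
    have : j = p := σ.injective (by rw [h, hp])
    omega
  have hsplit := Finset.card_filter_add_card_filter_not
    (s := Finset.Iio k) (p := fun j => σ j < a)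
  simp only [not_lt] at hsplit
  have hcongr : (Finset.Iio k).filter (fun j => a ≤ σ j)
      = (Finset.Iio k).filter (fun j => a < σ j) := by
    apply Finset.filter_congr
    intro j hj
    simp only [Finset.mem_Iio] at hj
    have := hne j hj
    constructor
    · intro h; omega
    · intro h; omega
  rw [hcongr, Nat.card_Iio] at hsplit
  have hb1 : ((Finset.Iio k).filter (fun j => σ j < a)).card ≤ a := by
    have := Finset.card_le_card_of_injOn (f := σ)
      (s := (Finset.Iio k).filter (fun j => σ j < a)) (t := Finset.range a)
      (by intro j hj; simp only [Finset.mem_coe, Finset.mem_filter] at hj; simp [hj.2])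
      (fun x _ y _ h => σ.injective h)
    simpa using this
  have hb2 : ((Finset.Iio k).filter (fun j => a < σ j)).card = ssT σ a lo := by
    have := ssT_ext σ hlo Hno
    unfold ssT at this
    exact this
  omega

lemma ssL1 {σ : Equiv.Perm ℕ} {a p lo i : ℕ} (hp : σ p = a)
    (hli : lo ≤ i) (hip : i < p) (hia : σ i < a)
    (Hno : ∀ j, lo ≤ j → j < i → ¬ a < σ j) :
    σ i + ssB σ i < a + ssT σ a lo := by
  have hne : ∀ j, j < i → σ j ≠ a := by
    intro j hj h
    have : j = p := σ.injective (by rw [h, hp])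
    omega
  have hsplit := Finset.card_filter_add_card_filter_not
    (s := (Finset.Iio i).filter (fun j => σ i < σ j)) (p := fun j => σ j < a)
  simp only [not_lt, Finset.filter_filter] at hsplit
  have hB : ((Finset.Iio i).filter (fun j => σ i < σ j ∧ a ≤ σ j))
      = (Finset.Iio i).filter (fun j => a < σ j) := by
    ext j
    simp only [Finset.mem_filter, Finset.mem_Iio]
    constructor
    · rintro ⟨hj, _, h2⟩
      have := hne j hj
      exact ⟨hj, by omega⟩
    · rintro ⟨hj, h2⟩
      exact ⟨hj, by omega, by omega⟩
  rw [hB] at hsplit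
  have hb2 : ((Finset.Iio i).filter (fun j => a < σ j)).card = ssT σ a lo := by
    have := ssT_ext σ hli Hno
    unfold ssT at this
    exact this
  have hb1 : ((Finset.Iio i).filter (fun j => σ i < σ j ∧ σ j < a)).card
      ≤ a - σ i - 1 := by
    have := Finset.card_le_card_of_injOn (f := σ)
      (s := (Finset.Iio i).filter (fun j => σ i < σ j ∧ σ j < a))
      (t := Finset.Ioo (σ i) a)
      (by intro j hj; simp only [Finset.mem_coe, Finset.mem_filter] at hj; simp [Finset.mem_Ioo, hj.2.1, hj.2.2])
      (fun x _ y _ h => σ.injective h)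
    rw [Nat.card_Ioo] at this
    exact this
  unfold ssB
  omega

lemma ssL2 {σ : Equiv.Perm ℕ} {a p q lo i : ℕ} (hp : σ p = a) (hq : σ q = a + 1)
    (hli : lo ≤ i) (hip : i < p) (hiq : i < q) (hai : a < σ i)
    (Hno : ∀ j, lo ≤ j → j < i → ¬ a < σ j) (hloq : lo ≤ q) :
    a + ssT σ a lo + 2 ≤ σ i + ssB σ i := by
  have hia1 : σ i ≠ a + 1 := by
    intro h
    have : i = q := σ.injective (by rw [h, hq])
    omega
  have hia2 : a + 2 ≤ σ i := by omega
  -- split ssT σ a lo by σ i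
  have hsplit := Finset.card_filter_add_card_filter_not
    (s := (Finset.Iio lo).filter (fun j => a < σ j)) (p := fun j => σ i < σ j)
  simp only [not_lt, Finset.filter_filter] at hsplit
  -- first part ≤ ssB σ i
  have hb1 : ((Finset.Iio lo).filter (fun j => a < σ j ∧ σ i < σ j)).card ≤ ssB σ i := by
    apply Finset.card_le_card
    intro j hj
    simp only [Finset.mem_filter, Finset.mem_Iio] at hj ⊢
    exact ⟨by omega, hj.2.2⟩
  -- second part: values in Ioo a (σ i), avoiding a+1
  have hb2 : ((Finset.Iio lo).filter (fun j => a < σ j ∧ σ j ≤ σ i)).card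
      ≤ σ i - a - 2 := by
    have hmem : ∀ j ∈ (Finset.Iio lo).filter (fun j => a < σ j ∧ σ j ≤ σ i),
        σ j ∈ (Finset.Ioo a (σ i)).erase (a + 1) := by
      intro j hj
      simp only [Finset.mem_filter, Finset.mem_Iio] at hj
      have hjq : σ j ≠ a + 1 := by
        intro h
        have : j = q := σ.injective (by rw [h, hq])
        omega
      have hji : σ j ≠ σ i := by
        intro h
        have : j = i := σ.injective h
        omega
      simp only [Finset.mem_erase, Finset.mem_Ioo]
      exact ⟨hjq, hj.2.1, by omega⟩
    have := Finset.card_le_card_of_injOn (f := σ) hmem (fun x _ y _ h => σ.injective h)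
    rw [Finset.card_erase_of_mem (by simp [Finset.mem_Ioo]; omega), Nat.card_Ioo] at this
    omega
  unfold ssT
  omega

lemma ssL3p {σ : Equiv.Perm ℕ} {a p lo : ℕ} (hp : σ p = a) (hlop : lo ≤ p)
    (Hno : ∀ j, lo ≤ j → j < p → ¬ a < σ j) : ssB σ p = ssT σ a lo := by
  have : ssB σ p = ssT σ a p := by unfold ssB ssT; rw [hp]
  rw [this, ssT_ext σ hlop Hno]

lemma ssL3q {σ : Equiv.Perm ℕ} {a q lo : ℕ} (hq : σ q = a + 1) (hloq : lo ≤ q)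
    (Hno : ∀ j, lo ≤ j → j < q → ¬ a < σ j) : ssB σ q = ssT σ a lo := by
  have h1 : ssB σ q = ((Finset.Iio q).filter (fun j => a < σ j)).card := by
    unfold ssB
    rw [hq]
    congr 1
    apply Finset.filter_congr
    intro j hj
    simp only [Finset.mem_Iio] at hj
    have hne : σ j ≠ a + 1 := by
      intro h
      have : j = q := σ.injective (by rw [h, hq])
      omega
    constructor
    · intro h; omega
    · intro h; omega
  rw [h1]
  have := ssT_ext σ hloq Hno
  unfold ssT at this
  exact this
lemma ssKeyA {M : ℕ} {σ : Equiv.Perm ℕ} (h0 : σ 0 = 0)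
    (hfix : ∀ x, M ≤ x → σ x = x)
    {a p q lo α B : ℕ} (hp : σ p = a) (hq : σ q = a + 1) (hpM : p < M)
    (ha : 1 ≤ a) (hα : α = a + ssT σ a lo)
    (hBp : B ≤ p) (hBq : B ≤ q) (hBα : B ≤ α) (hloq : lo ≤ q)
    (Hdiag : ∀ i jj, (i, jj) ∈ ssD M σ → lo ≤ i → i < B → i + jj + 1 ≠ α) :
    ∀ i, lo ≤ i → i < B → ¬ a < σ i := by
  by_contra hcon
  push_neg at hcon
  obtain ⟨i0, hex⟩ : ∃ i, lo ≤ i ∧ i < B ∧ a < σ i := by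
    obtain ⟨i, h1, h2, h3⟩ := hcon
    exact ⟨i, h1, h2, h3⟩
  have hEx : ∃ i, lo ≤ i ∧ i < B ∧ a < σ i := ⟨i0, hex⟩
  have hspec := Nat.find_spec hEx
  set i := Nat.find hEx with hi
  obtain ⟨hli, hiB, hai⟩ := hspec
  have Hno : ∀ j, lo ≤ j → j < i → ¬ a < σ j := by
    intro j hj1 hj2 hj3
    exact Nat.find_min hEx hj2 ⟨hj1, by omega, hj3⟩
  have hip : i < p := by omega
  have hiq : i < q := by omega
  have hL2 := ssL2 hp hq hli hip hiq hai Hno hloq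
  have hi1 : 1 ≤ i := by
    by_contra h
    have : i = 0 := by omega
    rw [this, h0] at hai
    omega
  have hiM : i < M := by omega
  have hd := ss_d hfix hiM
  have hcell : (i, α - 1 - i) ∈ ssD M σ := by
    rw [mem_ssD]
    exact ⟨hi1, hiM, by omega⟩
  exact Hdiag i (α - 1 - i) hcell hli hiB (by omega)
theorem ssSlideChar {M a : ℕ} {σ : Equiv.Perm ℕ} (h0 : σ 0 = 0)
    (hfix : ∀ x, M ≤ x → σ x = x) (ha : 1 ≤ a) (haM : a + 2 ≤ M)
    {p q : ℕ} (hp : σ p = a) (hq : σ q = a + 1) :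
    ∀ lo α T', SlideAux (ssD M σ) lo α T' → lo ≤ p → lo ≤ q →
      α = a + ssT σ a lo →
      p < q ∧ T' = insert (p, ssC M σ p) (ssD M σ) := by
  have hpM : p < M := by
    by_contra h
    push_neg at h
    have := hfix p h
    rw [hp] at this
    omega
  have hqM : q < M := by
    by_contra h
    push_neg at h
    have := hfix q h
    rw [hq] at this
    omega
  have hp1 : 1 ≤ p := by
    rcases Nat.eq_zero_or_pos p with h | h
    · rw [h, h0] at hp; omega
    · exact h
  have hq1 : 1 ≤ q := by
    rcases Nat.eq_zero_or_pos q with h | h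
    · rw [h, h0] at hq; omega
    · exact h
  have hpq : p ≠ q := by
    intro h
    rw [h, hq] at hp
    omega
  intro lo α T' h
  induction h with
  | s1a lo α hd1 hd2 =>
    intro hlop hloq hα
    have HnoB : ∀ i, lo ≤ i → i < min (min p q) α → ¬ a < σ i := by
      refine ssKeyA (B := min (min p q) α) h0 hfix hp hq hpM ha hα
        (by omega) (by omega) (by omega) hloq ?_
      intro i jj hmem hloi hiB heq
      exact hd1 (i, jj) hmem hloi heq
    have hloα : lo ≤ α := by
      have := ssL0 hp hlop le_rfl (fun j hj1 hj2 => by omega)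
      omega
    have hα1 : 1 ≤ α := by omega
    have hpq' : p < q := by
      rcases Nat.lt_trichotomy p q with h | h | h
      · exact h
      · exact absurd h hpq
      · exfalso
        by_cases hqα : q ≤ α
        · have HnoQ : ∀ j, lo ≤ j → j < q → ¬ a < σ j :=
            fun j a1 a2 => HnoB j a1 (by omega)
          have hbq := ssL3q hq hloq HnoQ
          have hdq := ss_d hfix hqM
          rw [hq, hbq] at hdq
          rcases Nat.lt_or_ge q α with h2 | h2
          · have hcell : (q, α - 1 - q) ∈ ssD M σ := mem_ssD.2 ⟨hq1, hqM, by omega⟩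
            exact hd1 (q, α - 1 - q) hcell (by omega) (by omega)
          · have hcell : (q, 0) ∈ ssD M σ := mem_ssD.2 ⟨hq1, hqM, by omega⟩
            exact hd2 (q, 0) hcell (by omega) (by omega)
        · push_neg at hqα
          have hσα : ¬ a < σ α := by
            intro hcon
            have HnoA : ∀ j, lo ≤ j → j < α → ¬ a < σ j :=
              fun j a1 a2 => HnoB j a1 (by omega)
            have hL2 := ssL2 hp hq hloα (by omega) (by omega) hcon HnoA hloq
            have hdα := ss_d hfix (show α < M by omega)
            have hcell : (α, 0) ∈ ssD M σ := mem_ssD.2 ⟨hα1, by omega, by omega⟩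
            exact hd2 (α, 0) hcell hloα (by omega)
          have := ssL0 hp (show α + 1 ≤ p by omega) (by omega : lo ≤ α + 1)
            (fun j hj1 hj2 => by
              rcases Nat.lt_or_ge j α with h3 | h3
              · exact HnoB j hj1 (by omega)
              · have hje : j = α := by omega
                rw [hje]; exact hσα)
          omega
    refine ⟨hpq', ?_⟩
    by_cases hpα : p ≤ α
    · have HnoP : ∀ j, lo ≤ j → j < p → ¬ a < σ j :=
        fun j a1 a2 => HnoB j a1 (by omega)
      have hbp := ssL3p hp hlop HnoP
      have hdp := ss_d hfix hpM
      rw [hp, hbp] at hdp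
      rcases Nat.lt_or_ge p α with h2 | h2
      · exfalso
        have hcell : (p, α - 1 - p) ∈ ssD M σ := mem_ssD.2 ⟨hp1, hpM, by omega⟩
        exact hd1 (p, α - 1 - p) hcell (by omega) (by omega)
      · have hpeq : p = α := by omega
        have hcp : ssC M σ p = 0 := by omega
        have : ((α : ℕ), (0 : ℕ)) = (p, ssC M σ p) := by rw [hcp, hpeq]
        rw [this]
    · exfalso
      push_neg at hpα
      have hσα : ¬ a < σ α := by
        intro hcon
        have HnoA : ∀ j, lo ≤ j → j < α → ¬ a < σ j :=
          fun j a1 a2 => HnoB j a1 (by omega)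
        have hL2 := ssL2 hp hq hloα (by omega) (by omega) hcon HnoA hloq
        have hdα := ss_d hfix (show α < M by omega)
        have hcell : (α, 0) ∈ ssD M σ := mem_ssD.2 ⟨hα1, by omega, by omega⟩
        exact hd2 (α, 0) hcell hloα (by omega)
      have := ssL0 hp (show α + 1 ≤ p by omega) (by omega : lo ≤ α + 1)
        (fun j hj1 hj2 => by
          rcases Nat.lt_or_ge j α with h3 | h3
          · exact HnoB j hj1 (by omega)
          · have hje : j = α := by omega
            rw [hje]; exact hσα)
      omega
  | s1c lo α T' hd1 hm0 hlo2 hm1 hrec IH =>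
    intro hlop hloq hα
    have hmm := mem_ssD.1 hm1
    have hα1 : 1 ≤ α := hmm.1
    have hαM : α < M := hmm.2.1
    have hcα : 2 ≤ ssC M σ α := by have := hmm.2.2; omega
    have hdα := ss_d hfix hαM
    have HnoB : ∀ i, lo ≤ i → i < min (min p q) α → ¬ a < σ i := by
      refine ssKeyA (B := min (min p q) α) h0 hfix hp hq hpM ha hα
        (by omega) (by omega) (by omega) hloq ?_
      intro i jj hmem hloi hiB heq
      exact hd1 (i, jj) hmem hloi heq
    have hrα : α < p ∧ α < q := by
      rcases Nat.lt_trichotomy (min p q) α with h | h | h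
      · exfalso
        rcases Nat.le_total p q with hle | hle
        · have hpα : p < α := by omega
          have HnoP : ∀ j, lo ≤ j → j < p → ¬ a < σ j :=
            fun j a1 a2 => HnoB j a1 (by omega)
          have hbp := ssL3p hp hlop HnoP
          have hdp := ss_d hfix hpM
          rw [hp, hbp] at hdp
          have hcell : (p, α - 1 - p) ∈ ssD M σ := mem_ssD.2 ⟨hp1, hpM, by omega⟩
          exact hd1 (p, α - 1 - p) hcell (by omega) (by omega)
        · have hqα : q < α := by omega
          have HnoQ : ∀ j, lo ≤ j → j < q → ¬ a < σ j :=
            fun j a1 a2 => HnoB j a1 (by omega)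
          have hbq := ssL3q hq hloq HnoQ
          have hdq := ss_d hfix hqM
          rw [hq, hbq] at hdq
          have hcell : (q, α - 1 - q) ∈ ssD M σ := mem_ssD.2 ⟨hq1, hqM, by omega⟩
          exact hd1 (q, α - 1 - q) hcell (by omega) (by omega)
      · exfalso
        rcases Nat.le_total p q with hle | hle
        · have hpα : p = α := by omega
          have HnoP : ∀ j, lo ≤ j → j < p → ¬ a < σ j :=
            fun j a1 a2 => HnoB j a1 (by omega)
          have hbp := ssL3p hp hlop HnoP
          have hdp := ss_d hfix hpM
          rw [hp, hbp] at hdp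
          rw [hpα] at hdp
          omega
        · have hqα : q = α := by omega
          have HnoQ : ∀ j, lo ≤ j → j < q → ¬ a < σ j :=
            fun j a1 a2 => HnoB j a1 (by omega)
          have hbq := ssL3q hq hloq HnoQ
          have hdq := ss_d hfix hqM
          rw [hq, hbq] at hdq
          rw [hqα] at hdq
          omega
      · exact ⟨by omega, by omega⟩
    obtain ⟨hαp, hαq⟩ := hrα
    have HnoA : ∀ j, lo ≤ j → j < α → ¬ a < σ j :=
      fun j a1 a2 => HnoB j a1 (by omega)
    have hσα : a < σ α := by
      by_contra hcon
      push_neg at hcon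
      have hne : σ α ≠ a := by
        intro h
        have : α = p := σ.injective (by rw [h, hp])
        omega
      have := ssL1 hp hlo2 hαp (by omega) HnoA
      omega
    have htsucc := ssT_succ σ hlo2 HnoA hσα
    exact IH (by omega) (by omega) (by omega)
  | s2a lo α i j hmem hloi hdiag hmin htop =>
    intro hlop hloq hα
    have hmm := mem_ssD.1 hmem
    have htt : ¬ (j + 1 < ssC M σ i) := fun h => htop (mem_ssD.2 ⟨hmm.1, hmm.2.1, h⟩)
    have hci : ssC M σ i = j + 1 := by have := hmm.2.2; omega
    have hdi := ss_d hfix hmm.2.1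
    have HnoB : ∀ k, lo ≤ k → k < min (min p q) i → ¬ a < σ k := by
      refine ssKeyA (B := min (min p q) i) h0 hfix hp hq hpM ha hα
        (by omega) (by omega) (by omega) hloq ?_
      intro i' jj hmemi hloi' hiB heq
      have := hmin (i', jj) hmemi hloi' heq
      omega
    have himin : ¬ (i < p ∧ i < q) := by
      rintro ⟨hh1, hh2⟩
      have Hno : ∀ k, lo ≤ k → k < i → ¬ a < σ k :=
        fun k a1 a2 => HnoB k a1 (by omega)
      rcases Nat.lt_trichotomy (σ i) a with h | h | h
      · have := ssL1 hp hloi hh1 h Hno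
        omega
      · have : i = p := σ.injective (by rw [h, hp])
        omega
      · have := ssL2 hp hq hloi hh1 hh2 h Hno hloq
        omega
    have himin2 : ¬ (min p q < i) := by
      intro hlt
      rcases Nat.le_total p q with hle | hle
      · have Hno : ∀ k, lo ≤ k → k < p → ¬ a < σ k :=
          fun k a1 a2 => HnoB k a1 (by omega)
        have hbp := ssL3p hp hlop Hno
        have hdp := ss_d hfix hpM
        rw [hp, hbp] at hdp
        have hcell : (p, α - 1 - p) ∈ ssD M σ := mem_ssD.2 ⟨hp1, hpM, by omega⟩
        have := hmin (p, α - 1 - p) hcell (by omega) (by omega)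
        omega
      · have Hno : ∀ k, lo ≤ k → k < q → ¬ a < σ k :=
          fun k a1 a2 => HnoB k a1 (by omega)
        have hbq := ssL3q hq hloq Hno
        have hdq := ss_d hfix hqM
        rw [hq, hbq] at hdq
        have hcell : (q, α - 1 - q) ∈ ssD M σ := mem_ssD.2 ⟨hq1, hqM, by omega⟩
        have := hmin (q, α - 1 - q) hcell (by omega) (by omega)
        omega
    have hple : p < q := by
      rcases Nat.lt_trichotomy p q with h | h | h
      · exact h
      · exact absurd h hpq
      · exfalso
        have hiq : i = q := by omega
        have Hno : ∀ k, lo ≤ k → k < q → ¬ a < σ k :=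
          fun k a1 a2 => HnoB k a1 (by omega)
        have hbq := ssL3q hq hloq Hno
        have hdq := ss_d hfix hqM
        rw [hq, hbq] at hdq
        rw [hiq] at hci hdi
        omega
    have hipp : i = p := by omega
    subst hipp
    refine ⟨hple, ?_⟩
    rw [hci]
  | s2c lo α i j T' hmem hloi hdiag hmin hc1 hc2 hrec IH =>
    intro hlop hloq hα
    have hmm := mem_ssD.1 hmem
    have hcc : j + 2 < ssC M σ i := (mem_ssD.1 hc2).2.2
    have hdi := ss_d hfix hmm.2.1
    have HnoB : ∀ k, lo ≤ k → k < min (min p q) i → ¬ a < σ k := by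
      refine ssKeyA (B := min (min p q) i) h0 hfix hp hq hpM ha hα
        (by omega) (by omega) (by omega) hloq ?_
      intro i' jj hmemi hloi' hiB heq
      have := hmin (i', jj) hmemi hloi' heq
      omega
    have hipq : i < p ∧ i < q := by
      by_contra hcon
      have hm : min p q ≤ i := by omega
      rcases Nat.lt_or_ge (min p q) i with hlt | hge
      · rcases Nat.le_total p q with hle | hle
        · have Hno : ∀ k, lo ≤ k → k < p → ¬ a < σ k :=
            fun k a1 a2 => HnoB k a1 (by omega)
          have hbp := ssL3p hp hlop Hno
          have hdp := ss_d hfix hpM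
          rw [hp, hbp] at hdp
          have hcell : (p, α - 1 - p) ∈ ssD M σ := mem_ssD.2 ⟨hp1, hpM, by omega⟩
          have := hmin (p, α - 1 - p) hcell (by omega) (by omega)
          omega
        · have Hno : ∀ k, lo ≤ k → k < q → ¬ a < σ k :=
            fun k a1 a2 => HnoB k a1 (by omega)
          have hbq := ssL3q hq hloq Hno
          have hdq := ss_d hfix hqM
          rw [hq, hbq] at hdq
          have hcell : (q, α - 1 - q) ∈ ssD M σ := mem_ssD.2 ⟨hq1, hqM, by omega⟩
          have := hmin (q, α - 1 - q) hcell (by omega) (by omega)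
          omega
      · rcases Nat.le_total p q with hle | hle
        · have hip : i = p := by omega
          have Hno : ∀ k, lo ≤ k → k < p → ¬ a < σ k :=
            fun k a1 a2 => HnoB k a1 (by omega)
          have hbp := ssL3p hp hlop Hno
          have hdp := ss_d hfix hpM
          rw [hp, hbp] at hdp
          rw [hip] at hdi hcc
          omega
        · have hiq : i = q := by omega
          have Hno : ∀ k, lo ≤ k → k < q → ¬ a < σ k :=
            fun k a1 a2 => HnoB k a1 (by omega)
          have hbq := ssL3q hq hloq Hno
          have hdq := ss_d hfix hqM
          rw [hq, hbq] at hdq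
          rw [hiq] at hdi hcc
          omega
    obtain ⟨hip, hiqq⟩ := hipq
    have Hno : ∀ k, lo ≤ k → k < i → ¬ a < σ k :=
      fun k a1 a2 => HnoB k a1 (by omega)
    have hσi : a < σ i := by
      rcases Nat.lt_trichotomy (σ i) a with h | h | h
      · exfalso
        have := ssL1 hp hloi hip h Hno
        omega
      · exfalso
        have : i = p := σ.injective (by rw [h, hp])
        omega
      · exact h
    have htsucc := ssT_succ σ hloi Hno hσi
    exact IH (by omega) (by omega) (by omega)
lemma ss_swap_lt_iff {a x y : ℕ} (h1 : ¬(x = a ∧ y = a + 1)) (h2 : ¬(x = a + 1 ∧ y = a)) :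
    (Equiv.swap a (a+1) x < Equiv.swap a (a+1) y) ↔ x < y := by
  simp only [Equiv.swap_apply_def]
  split_ifs <;> omega

lemma ssC_swap {M a p q : ℕ} {σ : Equiv.Perm ℕ} (hp : σ p = a) (hq : σ q = a + 1)
    (hpq : p < q) (hqM : q < M) (i : ℕ) :
    ssC M (Equiv.swap a (a+1) * σ) i = if i = p then ssC M σ i + 1 else ssC M σ i := by
  unfold ssC
  by_cases hip : i = p
  · subst hip
    simp only [if_pos rfl]
    have hset : (Finset.Ioo i M).filter
          (fun j => (Equiv.swap a (a+1) * σ) j < (Equiv.swap a (a+1) * σ) i)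
        = insert q ((Finset.Ioo i M).filter (fun j => σ j < σ i)) := by
      ext j
      simp only [Finset.mem_filter, Finset.mem_insert, Finset.mem_Ioo]
      simp only [Equiv.Perm.mul_apply]
      rw [hp, Equiv.swap_apply_left]
      constructor
      · rintro ⟨⟨hj1, hj2⟩, hlt⟩
        by_cases hjq : j = q
        · exact Or.inl hjq
        · right
          have hja : σ j ≠ a := by
            intro h
            have : j = i := σ.injective (by rw [h, hp])
            omega
          have hja1 : σ j ≠ a + 1 := by
            intro h
            have : j = q := σ.injective (by rw [h, hq])
            exact hjq this
          rw [Equiv.swap_apply_of_ne_of_ne hja hja1] at hlt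
          exact ⟨⟨hj1, hj2⟩, by omega⟩
      · rintro (rfl | ⟨⟨hj1, hj2⟩, hlt⟩)
        · refine ⟨⟨hpq, hqM⟩, ?_⟩
          rw [hq, Equiv.swap_apply_right]
          omega
        · have hja : σ j ≠ a := by omega
          have hja1 : σ j ≠ a + 1 := by omega
          rw [Equiv.swap_apply_of_ne_of_ne hja hja1]
          exact ⟨⟨hj1, hj2⟩, by omega⟩
    have hqnot : q ∉ (Finset.Ioo i M).filter (fun j => σ j < σ i) := by
      simp only [Finset.mem_filter, Finset.mem_Ioo, hp, hq]
      omega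
    rw [hset, Finset.card_insert_of_notMem hqnot]
    simp
  · simp only [if_neg hip]
    congr 1
    apply Finset.filter_congr
    intro j hj
    simp only [Finset.mem_Ioo] at hj
    simp only [Equiv.Perm.mul_apply]
    apply ss_swap_lt_iff
    · rintro ⟨h1, h2⟩
      have hjp : j = p := σ.injective (by rw [h1, hp])
      have hiq : i = q := σ.injective (by rw [h2, hq])
      omega
    · rintro ⟨h1, h2⟩
      exact hip (σ.injective (by rw [h2, hp]))

lemma ssD_swap {M a p q : ℕ} {σ : Equiv.Perm ℕ} (h0 : σ 0 = 0)
    (hfix : ∀ x, M ≤ x → σ x = x) (ha : 1 ≤ a) (haM : a + 2 ≤ M)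
    (hp : σ p = a) (hq : σ q = a + 1) (hpq : p < q) :
    ssD M (Equiv.swap a (a+1) * σ) = insert (p, ssC M σ p) (ssD M σ) := by
  have hpM : p < M := by
    by_contra h
    push_neg at h
    have := hfix p h
    rw [hp] at this
    omega
  have hqM : q < M := by
    by_contra h
    push_neg at h
    have := hfix q h
    rw [hq] at this
    omega
  have hp1 : 1 ≤ p := by
    rcases Nat.eq_zero_or_pos p with h | h
    · rw [h, h0] at hp; omega
    · exact h
  ext c
  obtain ⟨i, j⟩ := c
  rw [Finset.mem_insert, mem_ssD, mem_ssD, ssC_swap hp hq hpq hqM i]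
  by_cases hip : i = p
  · subst hip
    simp only [Prod.mk.injEq, eq_self_iff_true, if_true, true_and]
    constructor
    · rintro ⟨h1, h2, h3⟩
      rcases Nat.lt_or_ge j (ssC M σ i) with h4 | h4
      · exact Or.inr ⟨h1, h2, h4⟩
      · exact Or.inl (by omega)
    · rintro (rfl | ⟨h1, h2, h3⟩)
      · exact ⟨hp1, hpM, by omega⟩
      · exact ⟨h1, h2, by omega⟩
  · simp only [if_neg hip, Prod.mk.injEq]
    constructor
    · intro h; exact Or.inr h
    · rintro (⟨rfl, _⟩ | h)
      · exact absurd rfl hip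
      · exact h

lemma ss_permOf_append (w : List ℕ) (b : ℕ) :
    permOf (w ++ [b]) = permOf w * Equiv.swap b (b + 1) := by
  simp [permOf]

lemma ss_permOf_fix {M : ℕ} {w : List ℕ} (h : ∀ b ∈ w, b + 2 ≤ M) :
    ∀ x, M ≤ x → permOf w x = x := by
  induction w with
  | nil => intro x _; simp [permOf]
  | cons c t ih =>
    intro x hx
    have hstep : permOf (c :: t) = Equiv.swap c (c+1) * permOf t := by
      simp [permOf]
    rw [hstep, Equiv.Perm.mul_apply, ih (fun b hb => h b (List.mem_cons_of_mem _ hb)) x hx]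
    have hc := h c (List.mem_cons_self)
    exact Equiv.swap_apply_of_ne_of_ne (by omega) (by omega)

lemma ss_permOf_zero {w : List ℕ} (h : ∀ b ∈ w, 1 ≤ b) : permOf w 0 = 0 := by
  induction w with
  | nil => simp [permOf]
  | cons c t ih =>
    have hstep : permOf (c :: t) = Equiv.swap c (c+1) * permOf t := by
      simp [permOf]
    rw [hstep, Equiv.Perm.mul_apply, ih (fun b hb => h b (List.mem_cons_of_mem _ hb))]
    have hc := h c (List.mem_cons_self)
    exact Equiv.swap_apply_of_ne_of_ne (by omega) (by omega)

lemma ssSRD {M : ℕ} {w : List ℕ} {T : Finset Cell} (h : SRDiagram w T)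
    (hall : ∀ b ∈ w, 1 ≤ b ∧ b + 2 ≤ M) : T = ssD M (permOf w)⁻¹ := by
  induction h with
  | nil =>
    ext c
    obtain ⟨i, j⟩ := c
    simp only [Finset.notMem_empty, false_iff, mem_ssD]
    rintro ⟨h1, h2, h3⟩
    have : ssC M (permOf ([] : List ℕ))⁻¹ i = 0 := by
      unfold ssC
      rw [Finset.card_eq_zero, Finset.filter_eq_empty_iff]
      intro j hj
      simp only [Finset.mem_Ioo] at hj
      simp [permOf]
      omega
    omega
  | @snoc w T T' b hw hslides IH =>
    have hall' : ∀ c ∈ w, 1 ≤ c ∧ c + 2 ≤ M :=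
      fun c hc => hall c (List.mem_append_left _ hc)
    have hb : 1 ≤ b ∧ b + 2 ≤ M := hall b (List.mem_append_right _ (List.mem_cons_self))
    have hfixw : ∀ x, M ≤ x → permOf w x = x :=
      ss_permOf_fix (fun c hc => (hall' c hc).2)
    have h0w : permOf w 0 = 0 := ss_permOf_zero (fun c hc => (hall' c hc).1)
    have h0 : (permOf w)⁻¹ 0 = 0 := by
      rw [Equiv.Perm.inv_eq_iff_eq]
      exact h0w.symm
    have hfix : ∀ x, M ≤ x → (permOf w)⁻¹ x = x := by
      intro x hx
      rw [Equiv.Perm.inv_eq_iff_eq]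
      exact (hfixw x hx).symm
    have hp : (permOf w)⁻¹ (permOf w b) = b := by simp
    have hq : (permOf w)⁻¹ (permOf w (b + 1)) = b + 1 := by simp
    have hT := IH hall'
    rw [hT] at hslides
    have ht0 : b = b + ssT (permOf w)⁻¹ b 0 := by
      have hIio : Finset.Iio 0 = (∅ : Finset ℕ) := by ext x; simp
      simp [ssT, hIio]
    obtain ⟨hpq, hT'⟩ := ssSlideChar h0 hfix hb.1 hb.2 hp hq 0 b T' hslides
      (Nat.zero_le _) (Nat.zero_le _) ht0
    rw [hT', ← ssD_swap h0 hfix hb.1 hb.2 hp hq hpq]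
    congr 1
    rw [ss_permOf_append, mul_inv_rev, Equiv.swap_inv]

lemma ss_le_foldr (l : List ℕ) : ∀ b ∈ l, b ≤ l.foldr max 0 := by
  induction l with
  | nil => simp
  | cons c t ih =>
    intro b hb
    rcases List.mem_cons.1 hb with rfl | h
    · exact le_max_left _ _
    · exact le_trans (ih b h) (le_max_right _ _)

/-- Two words in `SRW(ℤ⁺)` of the same length representing the
same permutation have recording tableaux of the same shape. -/
theorem same_perm_implies_same_shape
    (w w' : List ℕ) (hw : IsPosWord w) (hw' : IsPosWord w')
    (hlen : w.length = w'.length)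
    (T T' : Finset Cell) (hT : SRDiagram w T) (hT' : SRDiagram w' T')
    (hperm : permOf w = permOf w') :
    T = T' := by
  set M := ((w ++ w').foldr max 0) + 2 with hM
  have hcw : ∀ b ∈ w, 1 ≤ b ∧ b + 2 ≤ M := by
    intro b hb
    have := ss_le_foldr (w ++ w') b (List.mem_append_left _ hb)
    exact ⟨hw b hb, by omega⟩
  have hcw' : ∀ b ∈ w', 1 ≤ b ∧ b + 2 ≤ M := by
    intro b hb
    have := ss_le_foldr (w ++ w') b (List.mem_append_right _ hb)
    exact ⟨hw' b hb, by omega⟩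
  rw [ssSRD hT hcw, ssSRD hT' hcw', hperm]

end SS
end

section
/- Let α = α₁...αₙ and β = β₁...βₙ be two words in SRW(ℤ⁺). If shape(R(α)) = shape(R(β)), then s_[α] = s_[β] (the two words represent the same permutation). -/
-- ===== auxiliary development =====

def colH (T : Finset Cell) (i : ℕ) : ℕ := (T.filter fun c => c.1 = i).card

def blockPerm (i h : ℕ) : Equiv.Perm ℕ :=
  ((List.range' i h).map fun k => Equiv.swap k (k+1)).prod

def towerProd (T : Finset Cell) (lo N : ℕ) : Equiv.Perm ℕ :=
  ((List.range' lo (N - lo)).reverse.map fun i => blockPerm i (colH T i)).prod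

lemma swap_commute_of_le {a b : ℕ} (h : a + 2 ≤ b) :
    Commute (Equiv.swap a (a+1)) (Equiv.swap b (b+1)) := by
  apply Equiv.Perm.Disjoint.commute
  intro x
  by_cases hx : x = a ∨ x = a + 1
  · right; apply Equiv.swap_apply_of_ne_of_ne <;> omega
  · left; push_neg at hx; exact Equiv.swap_apply_of_ne_of_ne hx.1 hx.2

lemma blockPerm_zero (i : ℕ) : blockPerm i 0 = 1 := rfl

lemma blockPerm_succ (i h : ℕ) :
    blockPerm i (h+1) = blockPerm i h * Equiv.swap (i+h) (i+h+1) := by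
  unfold blockPerm
  rw [List.range'_concat]
  simp [List.prod_append]

lemma blockPerm_commute_right {i h α : ℕ} (hc : i + h + 1 ≤ α) :
    Commute (Equiv.swap α (α+1)) (blockPerm i h) := by
  apply Commute.list_prod_right
  intro x hx
  simp only [List.mem_map, List.mem_range'_1] at hx
  obtain ⟨k, hk, rfl⟩ := hx
  exact (swap_commute_of_le (by omega)).symm

lemma towerProd_split (T : Finset Cell) (lo mid N : ℕ) (h1 : lo ≤ mid) (h2 : mid ≤ N) :
    towerProd T lo N = towerProd T mid N * towerProd T lo mid := by
  unfold towerProd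
  have h := List.range'_append (s := lo) (m := mid - lo) (n := N - mid) (step := 1)
  rw [show lo + 1*(mid-lo) = mid by omega, show mid - lo + (N - mid) = N - lo by omega] at h
  rw [← h]
  simp [List.prod_append]

lemma towerProd_congr {T T' : Finset Cell} {lo N : ℕ}
    (h : ∀ i, lo ≤ i → i < N → colH T i = colH T' i) :
    towerProd T lo N = towerProd T' lo N := by
  unfold towerProd
  congr 1
  apply List.map_congr_left
  intro i hi
  rw [List.mem_reverse, List.mem_range'_1] at hi
  rw [h i hi.1 (by omega)]

lemma towerProd_single (T : Finset Cell) (i : ℕ) :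
    towerProd T i (i+1) = blockPerm i (colH T i) := by
  unfold towerProd
  simp

lemma downclosed_range {S : Finset ℕ} (h : ∀ j ∈ S, ∀ k, k ≤ j → k ∈ S) :
    S = Finset.range S.card := by
  rcases S.eq_empty_or_nonempty with rfl | hne
  · simp
  · have hm : S = Finset.range (S.max' hne + 1) := by
      ext j
      simp only [Finset.mem_range, Nat.lt_succ_iff]
      exact ⟨fun hj => S.le_max' j hj, fun hj => h _ (S.max'_mem hne) j hj⟩
    have hc : S.card = S.max' hne + 1 := by
      have := congrArg Finset.card hm
      rwa [Finset.card_range] at this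
    rw [hc]; exact hm

lemma mem_iff_lt_colH {T : Finset Cell} (hT : IsTowerDiagram T) (i j : ℕ) :
    (i, j) ∈ T ↔ j < colH T i := by
  set S := (T.filter fun c => c.1 = i).image Prod.snd with hS
  have hinj : Set.InjOn (Prod.snd : Cell → ℕ) ↑(T.filter fun c => c.1 = i) := by
    intro c hc d hd hcd
    rw [Finset.mem_coe, Finset.mem_filter] at hc hd
    exact Prod.ext (hc.2.trans hd.2.symm) hcd
  have hcard : S.card = colH T i := by rw [hS, Finset.card_image_of_injOn hinj]; rfl
  have hmem : ∀ j, j ∈ S ↔ (i, j) ∈ T := by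
    intro j
    simp only [hS, Finset.mem_image, Finset.mem_filter]
    constructor
    · rintro ⟨c, ⟨hc, hc1⟩, rfl⟩
      rwa [show (i, c.2) = c from Prod.ext hc1.symm rfl]
    · intro hj; exact ⟨(i, j), ⟨hj, rfl⟩, rfl⟩
  have hdc : ∀ j ∈ S, ∀ k, k ≤ j → k ∈ S := by
    intro j hj k hk
    rw [hmem] at hj ⊢
    exact (hT _ hj).2 k hk
  rw [← hmem, downclosed_range hdc, Finset.mem_range, hcard]

lemma colH_insert {T : Finset Cell} {c : Cell} (hc : c ∉ T) (i : ℕ) :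
    colH (insert c T) i = if c.1 = i then colH T i + 1 else colH T i := by
  unfold colH
  rw [Finset.filter_insert]
  split_ifs with h
  · rw [Finset.card_insert_of_notMem (fun hmem => hc (Finset.mem_of_mem_filter c hmem))]
  · rfl

lemma colH_insert' {T : Finset Cell} {a b : ℕ} (hc : (a, b) ∉ T) (i : ℕ) :
    colH (insert (a, b) T) i = if a = i then colH T i + 1 else colH T i :=
  colH_insert hc i

lemma blockPerm_one (i : ℕ) : blockPerm i 1 = Equiv.swap i (i+1) := by
  have : blockPerm i (0+1) = Equiv.swap i (i+1) := by
    rw [blockPerm_succ, blockPerm_zero]; simp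
  simpa using this

lemma towerDiagram_insert {T : Finset Cell} {c : Cell} (hT : IsTowerDiagram T)
    (h1 : 1 ≤ c.1) (h0 : c.2 = 0 ∨ (c.1, c.2 - 1) ∈ T) : IsTowerDiagram (insert c T) := by
  intro d hd
  rcases Finset.mem_insert.mp hd with rfl | hd
  · refine ⟨h1, fun j' hj' => ?_⟩
    rcases Nat.eq_or_lt_of_le hj' with rfl | hlt
    · exact Finset.mem_insert_self _ _
    · rcases h0 with h0 | h0
      · omega
      · exact Finset.mem_insert_of_mem ((hT _ h0).2 j' (by omega))
  · rcases hT d hd with ⟨hd1, hd2⟩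
    exact ⟨hd1, fun j' hj' => Finset.mem_insert_of_mem (hd2 j' hj')⟩

lemma blockPerm_apply_of_gt {i h x : ℕ} (hx : i + h < x) : blockPerm i h x = x := by
  induction h with
  | zero => rfl
  | succ h ih =>
    rw [blockPerm_succ, Equiv.Perm.mul_apply,
      Equiv.swap_apply_of_ne_of_ne (by omega) (by omega), ih (by omega)]

lemma blockPerm_apply_of_lt {i h k : ℕ} (h1 : i ≤ k) (h2 : k < i + h) :
    blockPerm i h k = k + 1 := by
  induction h with
  | zero => omega
  | succ h ih =>
    rw [blockPerm_succ, Equiv.Perm.mul_apply]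
    rcases Nat.lt_or_ge k (i + h) with hk | hk
    · rw [Equiv.swap_apply_of_ne_of_ne (by omega) (by omega), ih hk]
    · have hk' : k = i + h := by omega
      subst hk'
      rw [Equiv.swap_apply_left, blockPerm_apply_of_gt (by omega)]

lemma braid_block {i h α : ℕ} (h1 : i ≤ α) (h2 : α + 2 ≤ i + h) :
    Equiv.swap (α+1) (α+2) * blockPerm i h = blockPerm i h * Equiv.swap α (α+1) := by
  have := Equiv.mul_swap_eq_swap_mul (blockPerm i h) α (α+1)
  rw [blockPerm_apply_of_lt h1 (by omega), blockPerm_apply_of_lt (by omega) (by omega)] at this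
  rw [this]

lemma towerProd_commute {T : Finset Cell} (hT : IsTowerDiagram T) {lo N α : ℕ}
    (hc : ∀ c ∈ T, lo ≤ c.1 → c.1 < N → c.1 + c.2 + 2 ≤ α) :
    Commute (Equiv.swap α (α+1)) (towerProd T lo N) := by
  apply Commute.list_prod_right
  intro x hx
  simp only [List.mem_map, List.mem_reverse, List.mem_range'_1] at hx
  obtain ⟨k, hk, rfl⟩ := hx
  rcases Nat.eq_zero_or_pos (colH T k) with h0 | h0
  · rw [h0, blockPerm_zero]; exact Commute.one_right _
  · have htop : (k, colH T k - 1) ∈ T := by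
      rw [mem_iff_lt_colH hT]; omega
    have := hc _ htop hk.1 (by omega)
    exact blockPerm_commute_right (by simp only at this; omega)

lemma cells_small {T : Finset Cell} (hT : IsTowerDiagram T) {lo X α : ℕ} (hX : X ≤ α)
    (hdiag : ∀ c ∈ T, lo ≤ c.1 → c.1 < X → c.1 + c.2 + 1 ≠ α) :
    ∀ c ∈ T, lo ≤ c.1 → c.1 < X → c.1 + c.2 + 2 ≤ α := by
  intro c hcT hlo hX'
  by_contra hcon
  have hj : α - 1 - c.1 ≤ c.2 := by omega
  have hmem := (hT c hcT).2 (α - 1 - c.1) hj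
  exact hdiag _ hmem hlo hX' (by omega)

lemma slide_key {T : Finset Cell} {lo α : ℕ} {T' : Finset Cell}
    (h : SlideAux T lo α T') (hT : IsTowerDiagram T) :
    lo ≤ α → 1 ≤ α →
    (∃ c : Cell, c ∉ T ∧ T' = insert c T ∧ lo ≤ c.1 ∧ 1 ≤ c.1 ∧
      (c.2 = 0 ∨ (c.1, c.2 - 1) ∈ T)) ∧
    ∀ N, (∀ c ∈ T', c.1 < N) →
      towerProd T' lo N = towerProd T lo N * Equiv.swap α (α+1) := by
  induction h with
  | s1a lo α h1 h2 =>
    intro hloα hα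
    have hc0 : ((α : ℕ), (0 : ℕ)) ∉ T := fun hmem => h2 _ hmem hloα (by simp)
    refine ⟨⟨(α, 0), hc0, rfl, hloα, hα, Or.inl rfl⟩, ?_⟩
    intro N hN
    have hαN : α + 1 ≤ N := hN (α, 0) (Finset.mem_insert_self _ _)
    have hch := colH_insert' hc0
    have hcolα : colH T α = 0 := by
      by_contra hcc
      exact h2 (α, 0) ((mem_iff_lt_colH hT α 0).2 (by omega)) hloα (by simp)
    have e1 : towerProd (insert (α, 0) T) (α+1) N = towerProd T (α+1) N :=
      (towerProd_congr (fun i hi _ => by rw [hch i, if_neg (by omega)])).symm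
    have e2 : towerProd (insert (α, 0) T) lo α = towerProd T lo α :=
      (towerProd_congr (fun i _ hi => by rw [hch i, if_neg (by omega)])).symm
    have e3 : towerProd (insert (α, 0) T) α (α+1) = Equiv.swap α (α+1) := by
      rw [towerProd_single, hch α, if_pos rfl, hcolα, blockPerm_one]
    have e4 : towerProd T α (α+1) = 1 := by
      rw [towerProd_single, hcolα, blockPerm_zero]
    have comm : Commute (Equiv.swap α (α+1)) (towerProd T lo α) :=
      towerProd_commute hT (cells_small hT le_rfl (fun c hc hl hx => h1 c hc hl))
    rw [towerProd_split _ lo (α+1) N (by omega) hαN,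
        towerProd_split _ lo α (α+1) hloα (by omega), e1, e2, e3,
        towerProd_split T lo (α+1) N (by omega) hαN,
        towerProd_split T lo α (α+1) hloα (by omega), e4, comm.eq]
    group
  | s1c lo α T' h1 h2 h2' h3 hrec ih =>
    intro hloα hα
    obtain ⟨⟨c, hcT, rfl, hclo, hc1, hc0⟩, hkey⟩ := ih le_rfl (by omega)
    refine ⟨⟨c, hcT, rfl, by omega, hc1, hc0⟩, ?_⟩
    intro N hN
    have hαN : α + 1 ≤ N := by
      have := hN (α, 0) (Finset.mem_insert_of_mem h2)
      omega
    have hcol2 : 2 ≤ colH T α := by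
      have := (mem_iff_lt_colH hT α 1).1 h3
      omega
    have e_lo : towerProd (insert c T) lo (α+1) = towerProd T lo (α+1) :=
      (towerProd_congr (fun i _ hi => by
        rw [colH_insert hcT i, if_neg (by omega)])).symm
    have hb : Equiv.swap (α+1) (α+1+1) * blockPerm α (colH T α)
        = blockPerm α (colH T α) * Equiv.swap α (α+1) :=
      braid_block le_rfl (by omega)
    have comm : Commute (Equiv.swap α (α+1)) (towerProd T lo α) :=
      towerProd_commute hT (cells_small hT le_rfl (fun c' hc' hl hx => h1 c' hc' hl))
    have key2 : Equiv.swap (α+1) (α+1+1) * (blockPerm α (colH T α) * towerProd T lo α)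
        = (blockPerm α (colH T α) * towerProd T lo α) * Equiv.swap α (α+1) := by
      rw [← mul_assoc, hb, mul_assoc, comm.eq, ← mul_assoc]
    rw [towerProd_split _ lo (α+1) N (by omega) hαN, hkey N hN, e_lo,
        towerProd_split T lo (α+1) N (by omega) hαN,
        towerProd_split T lo α (α+1) hloα (by omega), towerProd_single,
        mul_assoc, key2, ← mul_assoc]
  | s2a lo α i j hmem hlo hdiag hmin htop =>
    intro hloα hα
    have hi1 : 1 ≤ i := (hT _ hmem).1
    refine ⟨⟨(i, j+1), htop, rfl, hlo, hi1, Or.inr (by simpa using hmem)⟩, ?_⟩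
    intro N hN
    have hiN : i + 1 ≤ N := by
      have := hN (i, j+1) (Finset.mem_insert_self _ _)
      omega
    have hcol : colH T i = j + 1 := by
      have u := (mem_iff_lt_colH hT i j).1 hmem
      have v : ¬ (j + 1 < colH T i) := fun hh => htop ((mem_iff_lt_colH hT i (j+1)).2 hh)
      omega
    have hch := colH_insert' htop
    have e1 : towerProd (insert (i, j+1) T) (i+1) N = towerProd T (i+1) N :=
      (towerProd_congr (fun k hk _ => by rw [hch k, if_neg (by omega)])).symm
    have e2 : towerProd (insert (i, j+1) T) lo i = towerProd T lo i :=
      (towerProd_congr (fun k _ hk => by rw [hch k, if_neg (by omega)])).symm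
    have e3 : towerProd (insert (i, j+1) T) i (i+1) = blockPerm i (j+1) * Equiv.swap α (α+1) := by
      rw [towerProd_single, hch i, if_pos rfl, hcol, blockPerm_succ,
        show i + (j+1) = α by omega]
    have comm : Commute (Equiv.swap α (α+1)) (towerProd T lo i) := by
      apply towerProd_commute hT
      apply cells_small hT (by omega)
      intro c hc hl hx heq
      have := hmin c hc hl heq
      omega
    have key2 : (blockPerm i (j+1) * Equiv.swap α (α+1)) * towerProd T lo i
        = (blockPerm i (j+1) * towerProd T lo i) * Equiv.swap α (α+1) := by
      rw [mul_assoc, comm.eq, ← mul_assoc]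
    rw [towerProd_split _ lo (i+1) N (by omega) hiN,
        towerProd_split _ lo i (i+1) hlo (by omega), e1, e2, e3,
        towerProd_split T lo (i+1) N (by omega) hiN,
        towerProd_split T lo i (i+1) hlo (by omega), towerProd_single, hcol,
        ← mul_assoc, mul_assoc _ _ (towerProd T lo i), key2]
    group
  | s2c lo α i j T' hmem hlo hdiag hmin h1 h2 hrec ih =>
    intro hloα hα
    obtain ⟨⟨c, hcT, rfl, hclo, hc1, hc0⟩, hkey⟩ := ih (by omega) (by omega)
    refine ⟨⟨c, hcT, rfl, by omega, hc1, hc0⟩, ?_⟩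
    intro N hN
    have hiN : i + 1 ≤ N := by
      have := hN (i, j) (Finset.mem_insert_of_mem hmem)
      omega
    have hcolge : j + 3 ≤ colH T i := by
      have := (mem_iff_lt_colH hT i (j+2)).1 h2
      omega
    have e_lo : towerProd (insert c T) lo (i+1) = towerProd T lo (i+1) :=
      (towerProd_congr (fun k _ hk => by
        rw [colH_insert hcT k, if_neg (by omega)])).symm
    have hb : Equiv.swap (α+1) (α+1+1) * blockPerm i (colH T i)
        = blockPerm i (colH T i) * Equiv.swap α (α+1) :=
      braid_block (by omega) (by omega)
    have comm : Commute (Equiv.swap α (α+1)) (towerProd T lo i) := by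
      apply towerProd_commute hT
      apply cells_small hT (by omega)
      intro c' hc' hl hx heq
      have := hmin c' hc' hl heq
      omega
    have key2 : Equiv.swap (α+1) (α+1+1) * (blockPerm i (colH T i) * towerProd T lo i)
        = (blockPerm i (colH T i) * towerProd T lo i) * Equiv.swap α (α+1) := by
      rw [← mul_assoc, hb, mul_assoc, comm.eq, ← mul_assoc]
    rw [towerProd_split _ lo (i+1) N (by omega) hiN, hkey N hN, e_lo,
        towerProd_split T lo (i+1) N (by omega) hiN,
        towerProd_split T lo i (i+1) hlo (by omega), towerProd_single,
        mul_assoc, key2, ← mul_assoc]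

lemma permOf_append_singleton (w : List ℕ) (a : ℕ) :
    permOf (w ++ [a]) = permOf w * Equiv.swap a (a+1) := by
  unfold permOf
  rw [List.map_append, List.prod_append]
  simp

lemma towerProd_empty (lo N : ℕ) : towerProd (∅ : Finset Cell) lo N = 1 := by
  apply List.prod_eq_one
  intro x hx
  simp only [towerProd, List.mem_map] at hx
  obtain ⟨i, _, rfl⟩ := hx
  have : colH (∅ : Finset Cell) i = 0 := rfl
  rw [this, blockPerm_zero]

lemma srdiagram_key {w : List ℕ} {T : Finset Cell} (h : SRDiagram w T) :
    IsPosWord w → IsTowerDiagram T ∧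
      ∀ N, (∀ c ∈ T, c.1 < N) → permOf w = towerProd T 0 N := by
  induction h with
  | nil =>
    intro _
    refine ⟨fun c hc => absurd hc (Finset.notMem_empty c), fun N _ => ?_⟩
    rw [towerProd_empty]; rfl
  | @snoc w T T' a hw ha ih =>
    intro hpos
    have hposw : IsPosWord w := fun x hx => hpos x (List.mem_append_left _ hx)
    have ha' : 1 ≤ a := hpos a (List.mem_append_right _ (List.mem_singleton_self a))
    obtain ⟨hTd, hperm⟩ := ih hposw
    obtain ⟨⟨c, hcT, rfl, _, hc1, hc0⟩, hkey⟩ := slide_key ha hTd (Nat.zero_le _) ha'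
    refine ⟨towerDiagram_insert hTd hc1 hc0, fun N hN => ?_⟩
    rw [permOf_append_singleton, hperm N (fun d hd => hN d (Finset.mem_insert_of_mem hd)),
      hkey N hN]


/-- Two words in `SRW(ℤ⁺)` of the same length whose recording
tableaux have the same shape represent the same permutation. -/
theorem same_shape_implies_same_perm
    (w w' : List ℕ) (hw : IsPosWord w) (hw' : IsPosWord w')
    (hlen : w.length = w'.length)
    (T T' : Finset Cell) (hT : SRDiagram w T) (hT' : SRDiagram w' T')
    (hshape : T = T') :
    permOf w = permOf w' := by
  subst hshape
  obtain ⟨_, h1⟩ := srdiagram_key hT hw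
  obtain ⟨_, h2⟩ := srdiagram_key hT' hw'
  have hb : ∀ c ∈ T, c.1 < (T.sup fun c => c.1) + 1 :=
    fun c hc => Nat.lt_succ_of_le (Finset.le_sup hc)
  rw [h1 _ hb, h2 _ hb]
end
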